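/- arXiv:math/0402397 — 2 statements merged into one kernel-verified Lean document; each statement's English description precedes it below -/
import Mathlib

section
/- The set R_bot(w) := { (i,j) : 1 ≤ j ≤ c_i(w) }, where (c_1,...,c_{n-1}) is the code of w, is an rc-graph for w; that is, reading it by the prescribed linear order yields a reduced word for w. -/
/-- The adjacent transposition `s_a = (a, a+1)`, as a permutation of `ℕ` (we use the
letters `1, …, n-1`, permutations act on `{1, …, n}`). -/
def sTrans (a : ℕ) : Equiv.Perm ℕ := Equiv.swap a (a + 1)

/-- The product `s_{a_1} s_{a_2} ⋯` of a word. -/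
def wordProd (L : List ℕ) : Equiv.Perm ℕ := (L.map sTrans).prod

/-- `L` is a reduced word for `w`: a word in the letters `a ≥ 1` whose product of adjacent
transpositions is `w`, of minimal possible length. -/
def IsReducedWordFor (w : Equiv.Perm ℕ) (L : List ℕ) : Prop :=
  (∀ a ∈ L, 1 ≤ a) ∧ wordProd L = w ∧
    ∀ M : List ℕ, (∀ a ∈ M, 1 ≤ a) → wordProd M = w → L.length ≤ M.length

/-- `w` is a permutation of `{1, …, n}`: it fixes everything outside this interval. -/
def IsPermOn (n : ℕ) (w : Equiv.Perm ℕ) : Prop :=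
  ∀ i : ℕ, w i ≠ i → 1 ≤ i ∧ i ≤ n

/-- The strict linear order on crosses: `(i,j) < (i',j')` iff `i < i'`, or `i = i'` and
`j > j'`. -/
def rcLT (p q : ℕ × ℕ) : Prop := p.1 < q.1 ∨ (p.1 = q.1 ∧ q.2 < p.2)

/-- `L` is the listing of the finite set `R` in increasing `rcLT`-order. -/
def IsRCReading (R : Finset (ℕ × ℕ)) (L : List (ℕ × ℕ)) : Prop :=
  L.toFinset = R ∧ L.Chain' rcLT

/-- The word `a_1 a_2 ⋯` with `a_k = i_k + j_k - 1` read off a listing of crosses. -/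
def rcWord (L : List (ℕ × ℕ)) : List ℕ := L.map (fun p => p.1 + p.2 - 1)

/-- `R` is an rc-graph for `w ∈ Sₙ`: a subset of `{(i,j) : i,j ≥ 1, i+j ≤ n}` whose reading
word (in the prescribed linear order) is a reduced word for `w`. -/
def IsRCGraph (n : ℕ) (w : Equiv.Perm ℕ) (R : Finset (ℕ × ℕ)) : Prop :=
  (∀ p ∈ R, 1 ≤ p.1 ∧ 1 ≤ p.2 ∧ p.1 + p.2 ≤ n) ∧
    ∀ L : List (ℕ × ℕ), IsRCReading R L → IsReducedWordFor w (rcWord L)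

/-- The code of `w`: `c_i = #{ j : j > i ∧ w_j < w_i }`. -/
def permCode (n : ℕ) (w : Equiv.Perm ℕ) (i : ℕ) : ℕ :=
  ((Finset.Icc 1 n).filter (fun j => i < j ∧ w j < w i)).card

/-- The bottom rc-graph `R_bot(w) = { (i,j) : 1 ≤ j ≤ c_i(w) }`. -/
def Rbot (n : ℕ) (w : Equiv.Perm ℕ) : Finset (ℕ × ℕ) :=
  ((Finset.Icc 1 n) ×ˢ (Finset.Icc 1 n)).filter (fun p => p.2 ≤ permCode n w p.1)

namespace RCAux


lemma wordProd_nil : wordProd [] = 1 := rfl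
lemma wordProd_cons (a : ℕ) (L : List ℕ) : wordProd (a :: L) = sTrans a * wordProd L := by
  simp [wordProd]
lemma wordProd_append (L M : List ℕ) : wordProd (L ++ M) = wordProd L * wordProd M := by
  simp [wordProd]

lemma permOn_mem {n : ℕ} {w : Equiv.Perm ℕ} (hw : IsPermOn n w) {i : ℕ}
    (h1 : 1 ≤ i) (h2 : i ≤ n) : 1 ≤ w i ∧ w i ≤ n := by
  by_contra h
  have hfix : w (w i) = w i := by
    by_contra h'
    exact h (hw _ h')
  have := w.injective hfix
  rw [this] at h
  exact h ⟨h1, h2⟩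

lemma permOn_inv {n : ℕ} {w : Equiv.Perm ℕ} (hw : IsPermOn n w) : IsPermOn n w⁻¹ := by
  intro i hi
  apply hw
  intro h
  apply hi
  conv_lhs => rw [← h]
  simp

lemma permOn_zero {n : ℕ} {w : Equiv.Perm ℕ} (hw : IsPermOn n w) : w 0 = 0 := by
  by_contra h
  exact absurd (hw 0 h).1 (by omega)

lemma permCode_le {n : ℕ} {w : Equiv.Perm ℕ} (i : ℕ) : permCode n w i ≤ n - i := by
  have hsub : ((Finset.Icc 1 n).filter (fun j => i < j ∧ w j < w i)) ⊆ Finset.Icc (i+1) n := by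
    intro j hj
    simp only [Finset.mem_filter, Finset.mem_Icc] at *
    omega
  have := Finset.card_le_card hsub
  rw [Nat.card_Icc] at this; unfold permCode; omega

lemma permCode_le_n {n : ℕ} {w : Equiv.Perm ℕ} (i : ℕ) : permCode n w i ≤ n := by
  have := permCode_le (n := n) (w := w) i; omega




def rowWord (i c : ℕ) : List ℕ := (List.range c).reverse.map (i + ·)

lemma rowWord_succ (i c : ℕ) : rowWord i (c + 1) = (i + c) :: rowWord i c := by
  simp [rowWord, List.range_succ]

lemma rowProd_apply (i c x : ℕ) :
    wordProd (rowWord i c) x =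
      if x = i then i + c else if i < x ∧ x ≤ i + c then x - 1 else x := by
  induction c with
  | zero =>
      have : wordProd (rowWord i 0) = 1 := rfl
      rw [this]
      simp only [Equiv.Perm.one_apply]
      split_ifs <;> omega
  | succ c ih =>
      rw [rowWord_succ, wordProd_cons]
      simp only [Equiv.Perm.mul_apply, ih, sTrans, Equiv.swap_apply_def]
      split_ifs <;> omega

lemma rowProd_inv_apply (i c y : ℕ) :
    (wordProd (rowWord i c))⁻¹ y =
      if y = i + c then i else if i ≤ y ∧ y < i + c then y + 1 else y := by
  apply (wordProd (rowWord i c)).injective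
  rw [Equiv.Perm.inv_def, Equiv.apply_symm_apply, rowProd_apply]
  split_ifs <;> omega



section Step

/-- `w` maps `(k, n]` into `(k, n]`. -/
lemma range_step {n k : ℕ} {w : Equiv.Perm ℕ} (hw : IsPermOn n w)
  (hfix : ∀ i ≤ k, w i = i) {j : ℕ} (hj1 : k < j) (hj2 : j ≤ n) : k < w j ∧ w j ≤ n := by
  obtain ⟨h1, h2⟩ := permOn_mem hw (by omega) hj2
  refine ⟨?_, h2⟩
  by_contra h
  have : w (w j) = w j := hfix _ (by omega)
  have := w.injective this
  omega

lemma code_step {n k : ℕ} {w : Equiv.Perm ℕ} (hw : IsPermOn n w)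
  (hfix : ∀ i ≤ k, w i = i) (hk : k < n) : w (k + 1) = (k + 1) + permCode n w (k + 1) := by
  have hW := range_step hw hfix (j := k + 1) (by omega) hk
  have hcard : permCode n w (k + 1) = (Finset.Ico (k + 1) (w (k + 1))).card := by
    apply Finset.card_nbij (fun j => w j)
    · intro j hj
      simp only [Finset.mem_coe, Finset.mem_filter, Finset.mem_Icc] at hj
      obtain ⟨⟨hj1, hj2⟩, hj3, hj4⟩ := hj
      have := range_step hw hfix (j := j) (by omega) hj2
      simp only [Finset.mem_coe, Finset.mem_Ico]
      omega
    · intro a _ b _ hab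
      exact w.injective hab
    · intro m hm
      simp only [Finset.coe_Ico, Set.mem_Ico] at hm
      have hmn : m ≤ n := by omega
      have hfixinv : ∀ i ≤ k, w⁻¹ i = i := fun i hi => by
        conv_lhs => rw [← hfix i hi]
        exact Equiv.symm_apply_apply w i
      have hinv := range_step (permOn_inv hw) hfixinv (j := m) (by omega) hmn
      refine ⟨w⁻¹ m, ?_, by simp⟩
      simp only [Finset.coe_filter, Set.mem_setOf_eq, Finset.mem_Icc]
      have hne : w⁻¹ m ≠ k + 1 := by
        intro h
        have : m = w (k + 1) := by rw [← h]; simp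
        omega
      have : w (w⁻¹ m) = m := by simp
      refine ⟨⟨by omega, by omega⟩, by omega, by omega⟩
  rw [hcard, Nat.card_Ico]
  omega

end Step

def wordsFrom (n : ℕ) (w : Equiv.Perm ℕ) : ℕ → ℕ → List ℕ
  | _, 0 => []
  | k, d + 1 => rowWord (k + 1) (permCode n w (k + 1)) ++ wordsFrom n w (k + 1) d

lemma wordsFrom_congr {n : ℕ} {w v : Equiv.Perm ℕ} {k0 : ℕ}
    (h : ∀ i', k0 ≤ i' → permCode n w i' = permCode n v i') :
    ∀ d k', k0 ≤ k' + 1 → wordsFrom n w k' d = wordsFrom n v k' d := by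
  intro d
  induction d with
  | zero => intro k' _; rfl
  | succ d ih =>
      intro k' hk'
      show rowWord _ _ ++ _ = rowWord _ _ ++ _
      rw [h (k' + 1) (by omega), ih (k' + 1) (by omega)]

lemma permCode_one (n i : ℕ) : permCode n 1 i = 0 := by
  unfold permCode
  rw [Finset.card_eq_zero]
  ext j
  simp only [Finset.mem_filter, Finset.notMem_empty, iff_false, not_and]
  intro _ h
  simp only [Equiv.Perm.one_apply]
  omega

lemma wordsFrom_one (n : ℕ) : ∀ d k, wordsFrom n 1 k d = [] := by
  intro d
  induction d with
  | zero => intro k; rfl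
  | succ d ih =>
      intro k
      show rowWord _ _ ++ _ = _
      rw [permCode_one, ih]
      rfl

lemma main_prod {n : ℕ} : ∀ (d k : ℕ) (w : Equiv.Perm ℕ), IsPermOn n w →
    (∀ i ≤ k, w i = i) → n ≤ k + d → wordProd (wordsFrom n w k d) = w := by
  intro d
  induction d with
  | zero =>
      intro k w hw hfix hn
      have : w = 1 := by
        ext x
        simp only [Equiv.Perm.one_apply]
        by_cases hx : x ≤ k
        · exact hfix x hx
        · by_contra h
          have := hw x h
          omega
      rw [this]
      rfl
  | succ d ih =>
      intro k w hw hfix hn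
      by_cases hkn : n ≤ k
      · have hw1 : w = 1 := by
          ext x
          simp only [Equiv.Perm.one_apply]
          by_cases hx : x ≤ k
          · exact hfix x hx
          · by_contra h
            have := hw x h
            omega
        rw [hw1, wordsFrom_one]
        rfl
      · have hk : k < n := by omega
        set c := permCode n w (k + 1) with hc
        set r := wordProd (rowWord (k + 1) c) with hr
        set v := r⁻¹ * w with hv
        have hW : w (k + 1) = (k + 1) + c := code_step hw hfix hk
        have hcn : c ≤ n - (k + 1) := permCode_le _
        -- pointwise description of v
        have hvx : ∀ x, v x = r⁻¹ (w x) := fun x => rfl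
        have hrinv : ∀ y, r⁻¹ y = if y = (k+1) + c then (k+1)
            else if (k+1) ≤ y ∧ y < (k+1) + c then y + 1 else y := fun y => by
          rw [hr, rowProd_inv_apply]
        have hvfix : ∀ i ≤ k + 1, v i = i := by
          intro i hi
          rcases Nat.lt_or_ge i (k + 1) with h | h
          · rw [hvx, hfix i (by omega), hrinv]
            split_ifs <;> omega
          · have : i = k + 1 := by omega
            subst this
            rw [hvx, hW, hrinv]
            simp
        have hvperm : IsPermOn n v := by
          intro x hx
          by_contra h
          have h0 : ¬(1 ≤ x ∧ x ≤ n) := h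
          have hwx : w x = x := by
            by_contra h'
            exact h0 (hw x h')
          apply hx
          rw [hvx, hwx, hrinv]
          split_ifs <;> omega
        -- v agrees with w in code on rows ≥ k+2
        have hagree : ∀ i', k + 2 ≤ i' → permCode n w i' = permCode n v i' := by
          intro i' hi'
          unfold permCode
          congr 1
          apply Finset.filter_congr
          intro j hj
          simp only [Finset.mem_Icc] at hj
          by_cases hij : i' < j
          · simp only [hij, true_and]
            have hjr := range_step hw hfix (j := j) (by omega) hj.2
            have hir := range_step hw hfix (j := i') (by omega) (by omega)
            have hjW : w j ≠ (k+1) + c := by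
              rw [← hW]
              intro h
              have := w.injective h
              omega
            have hiW : w i' ≠ (k+1) + c := by
              rw [← hW]
              intro h
              have := w.injective h
              omega
            rw [hvx, hvx, hrinv, hrinv]
            constructor <;> intro hlt <;> (split_ifs at hlt ⊢ <;> omega)
          · simp [hij]
        have hvI := ih (k + 1) v hvperm hvfix (by omega)
        show wordProd (rowWord (k + 1) c ++ wordsFrom n w (k + 1) d) = w
        rw [wordProd_append,
          wordsFrom_congr hagree d (k + 1) (by omega), hvI, hv]
        exact mul_inv_cancel_left _ _


def rowList (i c : ℕ) : List (ℕ × ℕ) := (List.range c).reverse.map (fun j0 => (i, j0 + 1))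

def listFrom (n : ℕ) (w : Equiv.Perm ℕ) : ℕ → ℕ → List (ℕ × ℕ)
  | _, 0 => []
  | k, d + 1 => rowList (k + 1) (permCode n w (k + 1)) ++ listFrom n w (k + 1) d

lemma rcWord_rowList (i c : ℕ) : rcWord (rowList i c) = rowWord i c := by
  unfold rcWord rowList rowWord
  rw [List.map_map]
  apply List.map_congr_left
  intro j0 _
  simp only [Function.comp_apply]
  omega

lemma rcWord_listFrom (n : ℕ) (w : Equiv.Perm ℕ) :
    ∀ d k, rcWord (listFrom n w k d) = wordsFrom n w k d := by
  intro d
  induction d with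
  | zero => intro k; rfl
  | succ d ih =>
      intro k
      show rcWord (rowList _ _ ++ _) = rowWord _ _ ++ _
      rw [rcWord, List.map_append, ← rcWord, ← rcWord, rcWord_rowList, ih]

lemma mem_rowList {i c : ℕ} {p : ℕ × ℕ} :
    p ∈ rowList i c ↔ p.1 = i ∧ 1 ≤ p.2 ∧ p.2 ≤ c := by
  unfold rowList
  simp only [List.mem_map, List.mem_reverse, List.mem_range]
  constructor
  · rintro ⟨j0, hj0, rfl⟩
    exact ⟨rfl, Nat.succ_le_succ (Nat.zero_le _), Nat.succ_le_of_lt hj0⟩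
  · rintro ⟨h1, h2, h3⟩
    refine ⟨p.2 - 1, by omega, ?_⟩
    have h4 : p.2 - 1 + 1 = p.2 := by omega
    rw [h4, ← h1]

lemma mem_listFrom {n : ℕ} {w : Equiv.Perm ℕ} :
    ∀ {d k : ℕ} {p : ℕ × ℕ}, p ∈ listFrom n w k d ↔
      (k + 1 ≤ p.1 ∧ p.1 ≤ k + d ∧ 1 ≤ p.2 ∧ p.2 ≤ permCode n w p.1) := by
  intro d
  induction d with
  | zero =>
      intro k p
      simp only [listFrom, List.not_mem_nil, false_iff]
      omega
  | succ d ih =>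
      intro k p
      show p ∈ rowList _ _ ++ _ ↔ _
      rw [List.mem_append, mem_rowList, ih]
      constructor
      · rintro (⟨h1, h2, h3⟩ | ⟨h1, h2, h3⟩)
        · refine ⟨by omega, by omega, h2, ?_⟩
          rw [h1]; exact h3
        · exact ⟨by omega, by omega, h3⟩
      · rintro ⟨h1, h2, h3, h4⟩
        by_cases h : p.1 = k + 1
        · refine Or.inl ⟨h, h3, ?_⟩
          rw [← h]; exact h4
        · exact Or.inr ⟨by omega, by omega, h3, h4⟩

lemma chain'_rowList (i c : ℕ) : (rowList i c).Chain' rcLT := by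
  induction c with
  | zero => exact List.isChain_nil
  | succ c ih =>
      have : rowList i (c + 1) = (i, c + 1) :: rowList i c := by
        simp [rowList, List.range_succ]
      rw [this]; unfold List.Chain'; rw [List.isChain_cons]
      refine ⟨?_, ih⟩
      intro q hq
      have hq' : q ∈ rowList i c := List.mem_of_mem_head? hq
      rw [mem_rowList] at hq'
      right
      exact ⟨hq'.1.symm, by omega⟩

lemma chain'_listFrom (n : ℕ) (w : Equiv.Perm ℕ) :
    ∀ d k, (listFrom n w k d).Chain' rcLT := by
  intro d
  induction d with
  | zero => intro k; exact List.isChain_nil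
  | succ d ih =>
      intro k
      show List.Chain' rcLT (rowList _ _ ++ _)
      apply List.IsChain.append (chain'_rowList _ _) (ih (k + 1))
      intro x hx y hy
      have hx' : x ∈ rowList (k + 1) (permCode n w (k + 1)) := List.mem_of_mem_getLast? hx
      have hy' : y ∈ listFrom n w (k + 1) d := List.mem_of_mem_head? hy
      rw [mem_rowList] at hx'
      rw [mem_listFrom] at hy'
      left
      omega



instance : IsTrans (ℕ × ℕ) rcLT := by
  constructor
  intro a b c hab hbc
  unfold rcLT at *
  omega

instance : IsIrrefl (ℕ × ℕ) rcLT := by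
  constructor
  intro a h
  unfold rcLT at h
  omega

instance : IsAntisymm (ℕ × ℕ) rcLT := by
  constructor
  intro a b hab hba
  exfalso
  unfold rcLT at *
  omega

lemma reading_unique {R : Finset (ℕ × ℕ)} {L L' : List (ℕ × ℕ)}
    (h : L.toFinset = R ∧ L.Chain' rcLT) (h' : L'.toFinset = R ∧ L'.Chain' rcLT) :
    L = L' := by
  have hp : L.Pairwise rcLT := List.isChain_iff_pairwise.mp h.2
  have hp' : L'.Pairwise rcLT := List.isChain_iff_pairwise.mp h'.2
  have hn : L.Nodup := hp.nodup
  have hn' : L'.Nodup := hp'.nodup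
  have hperm : L.Perm L' :=
    List.perm_of_nodup_nodup_toFinset_eq hn hn' (by rw [h.1, h'.1])
  exact List.Perm.eq_of_pairwise' hp hp' hperm

/-- inversion count -/
def invCount (m : ℕ) (w : Equiv.Perm ℕ) : ℕ :=
  (((Finset.Icc 1 m) ×ˢ (Finset.Icc 1 m)).filter
    (fun p => p.1 < p.2 ∧ w p.2 < w p.1)).card

lemma invCount_one (m : ℕ) : invCount m 1 = 0 := by
  unfold invCount
  rw [Finset.card_eq_zero]
  ext p
  simp only [Finset.mem_filter, Finset.notMem_empty, iff_false, not_and]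
  intro _ h
  simp only [Equiv.Perm.one_apply] at *
  omega

lemma swap_lt_iff {a x y : ℕ} (h1 : ¬(x = a ∧ y = a + 1)) (h2 : ¬(x = a + 1 ∧ y = a)) :
    (Equiv.swap a (a + 1) x < Equiv.swap a (a + 1) y ↔ x < y) := by
  rw [Equiv.swap_apply_def, Equiv.swap_apply_def]
  split_ifs <;> omega

lemma invCount_mul_le (m a : ℕ) (v : Equiv.Perm ℕ) :
    invCount m (sTrans a * v) ≤ invCount m v + 1 := by
  classical
  set p₀ : ℕ × ℕ := if v⁻¹ a < v⁻¹ (a + 1) then (v⁻¹ a, v⁻¹ (a + 1))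
    else (v⁻¹ (a + 1), v⁻¹ a) with hp₀
  set S := (Finset.Icc 1 m) ×ˢ (Finset.Icc 1 m) with hS
  set Fw := S.filter (fun p => p.1 < p.2 ∧ (sTrans a * v) p.2 < (sTrans a * v) p.1) with hFw
  set Fv := S.filter (fun p => p.1 < p.2 ∧ v p.2 < v p.1) with hFv
  have key : Fw \ {p₀} = Fv \ {p₀} := by
    ext p
    simp only [Finset.mem_sdiff, Finset.mem_filter, Finset.mem_singleton, hFw, hFv]
    have : p ≠ p₀ → p.1 < p.2 →
        ((sTrans a * v) p.2 < (sTrans a * v) p.1 ↔ v p.2 < v p.1) := by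
      intro hne hlt
      simp only [sTrans, Equiv.Perm.mul_apply]
      apply swap_lt_iff
      · rintro ⟨hx, hy⟩
        apply hne
        have e1 : p.2 = v⁻¹ a := by rw [← hx]; simp
        have e2 : p.1 = v⁻¹ (a + 1) := by rw [← hy]; simp
        rw [hp₀, if_neg (by omega)]
        rw [← e2, ← e1]
      · rintro ⟨hx, hy⟩
        apply hne
        have e1 : p.2 = v⁻¹ (a + 1) := by rw [← hx]; simp
        have e2 : p.1 = v⁻¹ a := by rw [← hy]; simp
        rw [hp₀, if_pos (by omega)]
        rw [← e2, ← e1]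
    constructor
    · rintro ⟨⟨hp1, hp2, hp3⟩, hp4⟩
      exact ⟨⟨hp1, hp2, (this hp4 hp2).mp hp3⟩, hp4⟩
    · rintro ⟨⟨hp1, hp2, hp3⟩, hp4⟩
      exact ⟨⟨hp1, hp2, (this hp4 hp2).mpr hp3⟩, hp4⟩
  calc Fw.card ≤ (insert p₀ (Fw \ {p₀})).card := by
        apply Finset.card_le_card
        intro p hp
        by_cases h : p = p₀
        · rw [h]; exact Finset.mem_insert_self _ _
        · exact Finset.mem_insert_of_mem (by simp [Finset.mem_sdiff, hp, h])
    _ ≤ (Fw \ {p₀}).card + 1 := Finset.card_insert_le _ _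
    _ = (Fv \ {p₀}).card + 1 := by rw [key]
    _ ≤ Fv.card + 1 := by
        have : Fv \ {p₀} ⊆ Fv := Finset.sdiff_subset
        exact Nat.add_le_add_right (Finset.card_le_card this) 1

lemma invCount_wordProd_le (m : ℕ) : ∀ M : List ℕ, invCount m (wordProd M) ≤ M.length := by
  intro M
  induction M with
  | nil =>
      have : wordProd [] = 1 := rfl
      rw [this, invCount_one]
      exact Nat.zero_le _
  | cons a M ih =>
      rw [wordProd_cons]
      calc invCount m (sTrans a * wordProd M) ≤ invCount m (wordProd M) + 1 :=
            invCount_mul_le m a (wordProd M)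
        _ ≤ M.length + 1 := by omega
        _ = (a :: M).length := rfl


lemma invCount_eq_sum (n : ℕ) (w : Equiv.Perm ℕ) :
    invCount n w = ∑ i ∈ Finset.Icc 1 n, permCode n w i := by
  unfold invCount
  rw [Finset.card_eq_sum_card_fiberwise (f := Prod.fst) (t := Finset.Icc 1 n)
    (fun p hp => by
      simp only [Finset.mem_coe, Finset.mem_filter, Finset.mem_product] at hp
      exact hp.1.1)]
  apply Finset.sum_congr rfl
  intro i hi
  apply Finset.card_nbij (fun p => p.2)
  · intro p hp
    simp only [Finset.mem_coe, Finset.mem_filter, Finset.mem_product] at hp ⊢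
    obtain ⟨⟨⟨h1, h2⟩, h3⟩, h4⟩ := hp
    rw [h4] at h3
    exact ⟨h2, h3⟩
  · intro p hp q hq hpq
    simp only [Finset.coe_filter, Set.mem_setOf_eq, Finset.mem_filter] at hp hq
    have : p.1 = q.1 := by rw [hp.2, hq.2]
    exact Prod.ext this hpq
  · intro j hj
    simp only [Finset.coe_filter, Set.mem_setOf_eq, Finset.mem_filter,
      Finset.mem_Icc, Finset.mem_product, Set.mem_image, Finset.mem_coe] at hj ⊢
    simp only [Finset.mem_Icc] at hi
    exact ⟨(i, j), ⟨⟨⟨hi, hj.1⟩, hj.2⟩, rfl⟩, rfl⟩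

lemma card_Rbot (n : ℕ) (w : Equiv.Perm ℕ) :
    (Rbot n w).card = ∑ i ∈ Finset.Icc 1 n, permCode n w i := by
  unfold Rbot
  rw [Finset.card_eq_sum_card_fiberwise (f := Prod.fst) (t := Finset.Icc 1 n)
    (fun p hp => by
      simp only [Finset.mem_coe, Finset.mem_filter, Finset.mem_product] at hp
      exact hp.1.1)]
  apply Finset.sum_congr rfl
  intro i hi
  have : permCode n w i = (Finset.Icc 1 (permCode n w i)).card := by
    rw [Nat.card_Icc]; omega
  rw [this]
  apply Finset.card_nbij (fun p => p.2)
  · intro p hp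
    simp only [Finset.mem_coe, Finset.mem_filter, Finset.mem_product, Finset.mem_Icc] at hp ⊢
    obtain ⟨⟨⟨h1, h2⟩, h3⟩, h4⟩ := hp
    rw [h4] at h3
    exact ⟨h2.1, h3⟩
  · intro p hp q hq hpq
    simp only [Finset.coe_filter, Set.mem_setOf_eq, Finset.mem_filter] at hp hq
    have : p.1 = q.1 := by rw [hp.2, hq.2]
    exact Prod.ext this hpq
  · intro j hj
    simp only [Finset.mem_coe, Finset.mem_Icc] at hj
    simp only [Finset.mem_Icc] at hi
    have hcn : permCode n w i ≤ n := permCode_le_n (n := n) (w := w) i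
    refine ⟨(i, j), ?_, rfl⟩
    simp only [Finset.mem_coe, Finset.mem_filter, Finset.mem_product, Finset.mem_Icc]
    exact ⟨⟨⟨hi, ⟨hj.1, by omega⟩⟩, hj.2⟩, trivial⟩


end RCAux

/-- `R_bot(w)` is an rc-graph for `w`: its reading word is a reduced word for `w`. -/
theorem stmt4 (n : ℕ) (w : Equiv.Perm ℕ) (hw : IsPermOn n w) :
    IsRCGraph n w (Rbot n w) := by
  classical
  constructor
  · intro p hp
    simp only [Rbot, Finset.mem_filter, Finset.mem_product, Finset.mem_Icc] at hp
    obtain ⟨⟨⟨h1, h2⟩, h3, h4⟩, h5⟩ := hp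
    have := RCAux.permCode_le (n := n) (w := w) p.1
    exact ⟨h1, h3, by omega⟩
  · intro L hL
    have h0 : ∀ i ≤ 0, w i = i := by
      intro i hi
      have hi0 : i = 0 := by omega
      rw [hi0]
      exact RCAux.permOn_zero hw
    have hread : (RCAux.listFrom n w 0 n).toFinset = Rbot n w ∧
        (RCAux.listFrom n w 0 n).Chain' rcLT := by
      constructor
      · ext p
        rw [List.mem_toFinset, RCAux.mem_listFrom]
        simp only [Rbot, Finset.mem_filter, Finset.mem_product, Finset.mem_Icc]
        have := RCAux.permCode_le_n (n := n) (w := w) p.1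
        constructor
        · rintro ⟨a, b, c, d⟩
          exact ⟨⟨⟨by omega, by omega⟩, ⟨c, by omega⟩⟩, d⟩
        · rintro ⟨⟨⟨a, b⟩, c, d⟩, e⟩
          exact ⟨by omega, by omega, c, e⟩
      · exact RCAux.chain'_listFrom n w n 0
    obtain ⟨hLt, hLc⟩ := hL
    have hLeq : L = RCAux.listFrom n w 0 n := RCAux.reading_unique ⟨hLt, hLc⟩ hread
    refine ⟨?_, ?_, ?_⟩
    · intro a ha
      rw [hLeq] at ha
      rw [rcWord, List.mem_map] at ha
      obtain ⟨p, hp, ha⟩ := ha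
      rw [RCAux.mem_listFrom] at hp
      have ha' : p.1 + p.2 - 1 = a := ha
      omega
    · rw [hLeq, RCAux.rcWord_listFrom]
      exact RCAux.main_prod (n := n) n 0 w hw h0 (by omega)
    · intro M hM1 hM2
      have hnd : L.Nodup := (List.isChain_iff_pairwise.mp hLc).nodup
      have hlen : (rcWord L).length = (Rbot n w).card := by
        rw [rcWord, List.length_map, ← hLt, List.toFinset_card_of_nodup hnd]
      have h1 : (Rbot n w).card = RCAux.invCount n w := by
        rw [RCAux.card_Rbot, RCAux.invCount_eq_sum]
      have h2 : RCAux.invCount n w ≤ M.length := by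
        rw [← hM2]
        exact RCAux.invCount_wordProd_le n M
      omega
end

section
/- For any two words u, v on a totally ordered alphabet, if u and v are Knuth equivalent then e_r(u) and e_r(v) are Knuth equivalent (where e_r(u) = ∅ iff e_r(v) = ∅); the same holds for f_r. -/
/-- The height function of the `r`-parenthesization of the word `u`: letters `r+1` are left
parentheses, letters `r` are right parentheses; `ht r u p` is the number of `(r+1)`'s minus
the number of `r`'s among the first `p` letters. -/
def ht (r : ℕ) (u : List ℕ) (p : ℕ) : ℤ :=
  ((u.take p).count (r + 1) : ℤ) - ((u.take p).count r : ℤ)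

/-- Position `q` of `u` holds a letter `r` which is unpaired in the `r`-pairing
(an unmatched right parenthesis: it creates a new minimum of the height function). -/
def UnpairedLow (r : ℕ) (u : List ℕ) (q : ℕ) : Prop :=
  q < u.length ∧ u.getD q 0 = r ∧ ∀ p ≤ q, ht r u (q + 1) < ht r u p

/-- Position `p` of `u` holds a letter `r+1` which is unpaired in the `r`-pairing
(an unmatched left parenthesis: the height function never returns to its level). -/
def UnpairedHigh (r : ℕ) (u : List ℕ) (p : ℕ) : Prop :=
  p < u.length ∧ u.getD p 0 = r + 1 ∧ ∀ q ≤ u.length, p < q → ht r u p < ht r u q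

instance (r : ℕ) (u : List ℕ) (q : ℕ) : Decidable (UnpairedLow r u q) := by
  unfold UnpairedLow; infer_instance

instance (r : ℕ) (u : List ℕ) (p : ℕ) : Decidable (UnpairedHigh r u p) := by
  unfold UnpairedHigh; infer_instance

/-- The position of the rightmost unpaired `r`, if any. -/
def fIndex (r : ℕ) (u : List ℕ) : Option ℕ :=
  ((List.range u.length).filter (fun q => decide (UnpairedLow r u q))).getLast?

/-- The coplactic operator `f_r`: change the rightmost unpaired `r` to `r+1`
(`none` plays the role of the empty word `∅`). -/
def fOp (r : ℕ) (u : List ℕ) : Option (List ℕ) :=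
  (fIndex r u).map (fun q => u.set q (r + 1))

/-- The position of the leftmost unpaired `r+1`, if any. -/
def eIndex (r : ℕ) (u : List ℕ) : Option ℕ :=
  ((List.range u.length).filter (fun p => decide (UnpairedHigh r u p))).head?

/-- The coplactic operator `e_r`: change the leftmost unpaired `r+1` to `r`. -/
def eOp (r : ℕ) (u : List ℕ) : Option (List ℕ) :=
  (eIndex r u).map (fun p => u.set p r)

/-- The operator `σ_r`: replace the unpaired subword `r^s (r+1)^t` by `r^t (r+1)^s`
(all other letters, and all paired `r`'s and `(r+1)`'s, stay in place). -/
def sigmaOp (r : ℕ) (u : List ℕ) : List ℕ :=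
  let ups := (List.range u.length).filter
    (fun p => decide (UnpairedLow r u p ∨ UnpairedHigh r u p))
  let t := (ups.filter (fun p => u.getD p 0 == r + 1)).length
  (List.range u.length).map (fun p =>
    if p ∈ ups then (if ups.idxOf p < t then r else r + 1) else u.getD p 0)
/-- An elementary Knuth transformation: `… i k j … ~ … k i j …` for `i ≤ j < k`, and
`… j i k … ~ … j k i …` for `i < j ≤ k`. -/
inductive KnuthStep : List ℕ → List ℕ → Prop
  | k1 (a b : List ℕ) (i j k : ℕ) (h1 : i ≤ j) (h2 : j < k) :
      KnuthStep (a ++ [i, k, j] ++ b) (a ++ [k, i, j] ++ b)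
  | k2 (a b : List ℕ) (i j k : ℕ) (h1 : i < j) (h2 : j ≤ k) :
      KnuthStep (a ++ [j, i, k] ++ b) (a ++ [j, k, i] ++ b)

/-- Knuth (plactic) equivalence: the reflexive-symmetric-transitive closure of the
elementary Knuth transformations. -/
def KnuthEquiv : List ℕ → List ℕ → Prop := Relation.EqvGen KnuthStep

namespace StmtAux
open List

open List

def Fir (P : ℕ → Prop) (n a : ℕ) : Prop := a < n ∧ P a ∧ ∀ b < a, ¬ P b
def Las (P : ℕ → Prop) (n a : ℕ) : Prop := a < n ∧ P a ∧ ∀ b, a < b → b < n → ¬ P b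

lemma Fir.unique {P : ℕ → Prop} {n a b : ℕ} (ha : Fir P n a) (hb : Fir P n b) : a = b := by
  rcases lt_trichotomy a b with h | h | h
  · exact absurd ha.2.1 (hb.2.2 a h)
  · exact h
  · exact absurd hb.2.1 (ha.2.2 b h)

lemma Las.unique {P : ℕ → Prop} {n a b : ℕ} (ha : Las P n a) (hb : Las P n b) : a = b := by
  rcases lt_trichotomy a b with h | h | h
  · exact absurd hb.2.1 (ha.2.2 b h (hb.1))
  · exact h
  · exact absurd ha.2.1 (hb.2.2 a h (ha.1))

lemma head?_filter {α : Type*} (p : α → Bool) (l : List α) :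
    (l.filter p).head? = l.find? p := by
  induction l with
  | nil => rfl
  | cons a l ih =>
    by_cases h : p a <;> simp [List.filter_cons, h, List.find?_cons, ih]

lemma head?_filter_range_some {n a : ℕ} {P : ℕ → Bool} :
    ((List.range n).filter P).head? = some a ↔ (a < n ∧ P a ∧ ∀ b < a, ¬ P b) := by
  rw [head?_filter, List.find?_eq_some_iff_append]
  constructor
  · rintro ⟨hPa, as, bs, hdec, hprev⟩
    have hlen := congrArg List.length hdec
    simp at hlen
    have hn : n = as.length + (bs.length + 1) := by omega
    rw [hn, List.range_add] at hdec
    obtain ⟨has, hcons⟩ := List.append_inj hdec (by simp)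
    rw [List.range_succ_eq_map, List.map_cons] at hcons
    have ha : a = as.length := by
      have := congrArg List.head? hcons
      simp at this
      omega
    subst ha
    refine ⟨by omega, hPa, fun b hb hPb => ?_⟩
    refine absurd hPb ?_
    have hmem : b ∈ as := by rw [← has]; exact List.mem_range.2 hb
    simpa using hprev b hmem
  · rintro ⟨han, hPa, hprev⟩
    refine ⟨hPa, List.range a, (List.range n).drop (a+1), ?_, fun b hb => by
      simp [hprev b (List.mem_range.1 hb)]⟩
    have hsplit : List.range n = List.range (a+1) ++ (List.range n).drop (a+1) := by
      conv_lhs => rw [← List.take_append_drop (a+1) (List.range n)]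
      rw [List.take_range, Nat.min_eq_left (by omega)]
    rw [List.range_succ] at hsplit
    exact hsplit.trans (by simp)

lemma head?_filter_range_none {n : ℕ} {P : ℕ → Bool} :
    ((List.range n).filter P).head? = none ↔ ∀ b < n, ¬ P b := by
  rw [List.head?_eq_none_iff, List.filter_eq_nil_iff]
  exact ⟨fun h b hb => h b (List.mem_range.2 hb), fun h b hb => h b (List.mem_range.1 hb)⟩

lemma getLast?_filter_range_some {n a : ℕ} {P : ℕ → Bool} :
    ((List.range n).filter P).getLast? = some a ↔
      (a < n ∧ P a ∧ ∀ b, a < b → b < n → ¬ P b) := by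
  induction n with
  | zero => simp
  | succ n ih =>
    rw [List.range_succ, List.filter_append]
    by_cases hP : P n
    · simp only [List.filter_cons, hP, if_pos, List.filter_nil]
      rw [List.getLast?_append_cons]
      simp only [List.getLast?_singleton]
      constructor
      · intro h
        obtain rfl : n = a := Option.some.inj h
        exact ⟨Nat.lt_succ_self n, hP, fun b hb1 hb2 => by omega⟩
      · rintro ⟨h1, h2, h3⟩
        by_cases han : a = n
        · simp [han]
        · exact absurd hP (h3 n (by omega) (Nat.lt_succ_self n))
    · have hnil : List.filter P [n] = [] := by simp [hP]
      rw [hnil, List.append_nil, ih]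
      constructor
      · rintro ⟨h1, h2, h3⟩
        exact ⟨by omega, h2, fun b hb1 hb2 => by
          rcases Nat.lt_or_ge b n with h | h
          · exact h3 b hb1 h
          · have hbn : b = n := by omega
            subst hbn; simp [hP]⟩
      · rintro ⟨h1, h2, h3⟩
        have han : a ≠ n := by rintro rfl; exact hP (by simpa using h2)
        exact ⟨by omega, h2, fun b hb1 hb2 => h3 b hb1 (by omega)⟩

lemma getLast?_filter_range_none {n : ℕ} {P : ℕ → Bool} :
    ((List.range n).filter P).getLast? = none ↔ ∀ b < n, ¬ P b := by
  rw [List.getLast?_eq_none_iff, List.filter_eq_nil_iff]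
  exact ⟨fun h b hb => h b (List.mem_range.2 hb), fun h b hb => h b (List.mem_range.1 hb)⟩


open List

/-- letter contribution -/
def dl (r x : ℕ) : ℤ := (if x = r + 1 then 1 else 0) - (if x = r then 1 else 0)

@[simp] lemma dl_r (r : ℕ) : dl r r = -1 := by simp [dl, Nat.succ_ne_self]
@[simp] lemma dl_r1 (r : ℕ) : dl r (r+1) = 1 := by simp [dl]
lemma dl_other {r x : ℕ} (h1 : x ≠ r) (h2 : x ≠ r + 1) : dl r x = 0 := by simp [dl, h1, h2]

lemma ht_zero (r : ℕ) (u : List ℕ) : ht r u 0 = 0 := by simp [ht]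

lemma ht_cons (r x : ℕ) (w : List ℕ) (δ : ℕ) :
    ht r (x :: w) (δ + 1) = dl r x + ht r w δ := by
  simp only [ht, List.take_succ_cons, List.count_cons, dl]
  rcases eq_or_ne x r with rfl | h1
  · have : x ≠ x + 1 := by omega
    simp_all; ring
  · rcases eq_or_ne x (r+1) with rfl | h2
    · simp_all; ring
    · simp_all [beq_iff_eq]

lemma ht_left (r : ℕ) (a x : List ℕ) {p : ℕ} (h : p ≤ a.length) :
    ht r (a ++ x) p = ht r a p := by
  simp [ht, List.take_append_of_le_length h]

lemma ht_mid (r : ℕ) (a x : List ℕ) (δ : ℕ) :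
    ht r (a ++ x) (a.length + δ) = ht r a a.length + ht r x δ := by
  simp only [ht, List.take_append, List.count_append, List.take_length, Nat.add_sub_cancel_left,
    List.take_of_length_le (Nat.le_add_right _ _)]
  push_cast; ring

section window
variable (r : ℕ) (a b : List ℕ) (x y z : ℕ)

lemma wlen : (a ++ [x,y,z] ++ b).length = a.length + 3 + b.length := by simp; omega

lemma ht_w (δ : ℕ) : ht r (a ++ [x,y,z] ++ b) (a.length + δ) =
    ht r a a.length + ht r ([x,y,z] ++ b) δ := by
  rw [List.append_assoc, ht_mid]

lemma ht_w0 : ht r (a ++ [x,y,z] ++ b) a.length = ht r a a.length := by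
  have := ht_w r a b x y z 0
  simpa [ht_zero] using this

lemma ht_w1 : ht r (a ++ [x,y,z] ++ b) (a.length + 1) = ht r a a.length + dl r x := by
  rw [ht_w]
  have : ht r ([x,y,z] ++ b) 1 = dl r x := by
    rw [show ([x,y,z] ++ b) = x :: ([y,z] ++ b) by simp, show (1:ℕ) = 0 + 1 by rfl, ht_cons,
      ht_zero]
    ring
  rw [this]

lemma ht_w2 : ht r (a ++ [x,y,z] ++ b) (a.length + 2) =
    ht r a a.length + dl r x + dl r y := by
  rw [ht_w]
  have : ht r ([x,y,z] ++ b) 2 = dl r x + dl r y := by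
    rw [show ([x,y,z] ++ b) = x :: (y :: ([z] ++ b)) by simp, show (2:ℕ) = 1 + 1 by rfl, ht_cons,
      show (1:ℕ) = 0 + 1 by rfl, ht_cons, ht_zero]
    ring
  rw [this]; ring

lemma ht_w3 (δ : ℕ) : ht r (a ++ [x,y,z] ++ b) (a.length + 3 + δ) =
    ht r a a.length + dl r x + dl r y + dl r z + ht r b δ := by
  have h : ht r (a ++ [x,y,z] ++ b) (a.length + (3 + δ)) =
      ht r a a.length + ht r ([x,y,z] ++ b) (3 + δ) := ht_w r a b x y z (3+δ)
  rw [show a.length + 3 + δ = a.length + (3 + δ) by omega, h]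
  have : ht r ([x,y,z] ++ b) (3 + δ) = dl r x + dl r y + dl r z + ht r b δ := by
    rw [show ([x,y,z] ++ b) = x :: (y :: (z :: b)) by simp,
      show (3 + δ : ℕ) = (δ + 1 + 1) + 1 by omega, ht_cons, ht_cons, ht_cons]
    ring
  rw [this]; ring

lemma ht_wlow {p : ℕ} (h : p ≤ a.length) : ht r (a ++ [x,y,z] ++ b) p = ht r a p := by
  rw [List.append_assoc, ht_left r a _ h]

lemma getD_w0 : (a ++ [x,y,z] ++ b).getD a.length 0 = x := by
  rw [List.append_assoc, List.getD_append_right _ _ _ _ (le_refl _)]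
  simp

lemma getD_w1 : (a ++ [x,y,z] ++ b).getD (a.length + 1) 0 = y := by
  rw [List.append_assoc, List.getD_append_right _ _ _ _ (by omega)]
  simp [show a.length + 1 - a.length = 1 by omega]

lemma getD_w2 : (a ++ [x,y,z] ++ b).getD (a.length + 2) 0 = z := by
  rw [List.append_assoc, List.getD_append_right _ _ _ _ (by omega)]
  simp [show a.length + 2 - a.length = 2 by omega]

lemma getD_wlow {p : ℕ} (h : p < a.length) : (a ++ [x,y,z] ++ b).getD p 0 = a.getD p 0 := by
  rw [List.append_assoc, List.getD_append _ _ _ _ h]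

lemma getD_whigh (δ : ℕ) : (a ++ [x,y,z] ++ b).getD (a.length + 3 + δ) 0 = b.getD δ 0 := by
  rw [List.append_assoc, List.getD_append_right _ _ _ _ (by omega)]
  have : ([x,y,z] ++ b).getD (a.length + 3 + δ - a.length) 0 = ([x,y,z] ++ b).getD (3 + δ) 0 := by
    congr 1; omega
  rw [this, List.getD_append_right _ _ _ _ (by simp)]
  simp [show 3 + δ - ([x,y,z] : List ℕ).length = δ by simp]

lemma set_wlow {p : ℕ} (h : p < a.length) (c : ℕ) :
    (a ++ [x,y,z] ++ b).set p c = (a.set p c) ++ [x,y,z] ++ b := by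
  rw [List.append_assoc, List.set_append_left _ _ (by omega), List.append_assoc]

lemma set_whigh (δ : ℕ) (c : ℕ) :
    (a ++ [x,y,z] ++ b).set (a.length + 3 + δ) c = a ++ [x,y,z] ++ b.set δ c := by
  rw [List.set_append_right _ _ (by simp +arith)]
  congr 1
  have h : a.length + 3 + δ - (a ++ [x,y,z]).length = δ := by simp +arith
  rw [h]

lemma set_w0 (c : ℕ) : (a ++ [x,y,z] ++ b).set a.length c = a ++ [c,y,z] ++ b := by
  rw [List.append_assoc, List.set_append_right _ _ (le_refl _), List.append_assoc]
  simp

lemma set_w1 (c : ℕ) : (a ++ [x,y,z] ++ b).set (a.length + 1) c = a ++ [x,c,z] ++ b := by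
  rw [List.append_assoc, List.set_append_right _ _ (by omega), List.append_assoc]
  simp [show a.length + 1 - a.length = 1 by omega]

lemma set_w2 (c : ℕ) : (a ++ [x,y,z] ++ b).set (a.length + 2) c = a ++ [x,y,c] ++ b := by
  rw [List.append_assoc, List.set_append_right _ _ (by omega), List.append_assoc]
  simp [show a.length + 2 - a.length = 2 by omega]

end window

/-- positions trichotomy -/
lemma pos_cases (m p : ℕ) : p ≤ m ∨ p = m + 1 ∨ p = m + 2 ∨ ∃ δ, p = m + 3 + δ := by
  rcases Nat.lt_or_ge p (m+3) with h | h
  · omega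
  · exact Or.inr (Or.inr (Or.inr ⟨p - m - 3, by omega⟩))



/-- a position whose letter is not `r` is not unpaired-low -/
lemma notLow_letter {r : ℕ} {u : List ℕ} {q : ℕ} (h : u.getD q 0 ≠ r) :
    ¬ UnpairedLow r u q := fun hL => h hL.2.1

lemma notHigh_letter {r : ℕ} {u : List ℕ} {p : ℕ} (h : u.getD p 0 ≠ r + 1) :
    ¬ UnpairedHigh r u p := fun hL => h hL.2.1

/-- kill unpaired-low via a weakly-lower-or-equal earlier height -/
lemma notLow_ge {r : ℕ} {u : List ℕ} {q p : ℕ} (hp : p ≤ q)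
    (h : ht r u p ≤ ht r u (q + 1)) : ¬ UnpairedLow r u q :=
  fun hL => absurd (hL.2.2 p hp) (not_lt.2 h)

lemma notHigh_le {r : ℕ} {u : List ℕ} {p q : ℕ} (hq : p < q) (hq' : q ≤ u.length)
    (h : ht r u q ≤ ht r u p) : ¬ UnpairedHigh r u p :=
  fun hL => absurd (hL.2.2 q hq' hq) (not_lt.2 h)

section congr
variable {r : ℕ} {u v : List ℕ} {d : ℕ}
variable (hlen : u.length = v.length)
variable (hht : ∀ p, p ≠ d → ht r u p = ht r v p)
variable {e : ℕ} (he1 : ht r u e = ht r v e)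
variable (he2 : ht r u e ≤ ht r u d) (he3 : ht r v e ≤ ht r v d)

include hlen hht he1 he2 he3 in
lemma low_congr (q : ℕ) (hq : u.getD q 0 = v.getD q 0) (hq1 : q + 1 ≠ d)
    (hed : d ≤ q → e ≤ q) : (UnpairedLow r u q ↔ UnpairedLow r v q) := by
  have key : ∀ (w w' : List ℕ), w.length = w'.length → w.getD q 0 = w'.getD q 0 →
      (∀ p, p ≠ d → ht r w p = ht r w' p) → ht r w e = ht r w' e →
      ht r w' e ≤ ht r w' d →
      UnpairedLow r w q → UnpairedLow r w' q := by
    intro w w' h1 h2 h3 h4 h5 hL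
    refine ⟨h1 ▸ hL.1, h2 ▸ hL.2.1, fun p hp => ?_⟩
    have hq1' : ht r w' (q+1) = ht r w (q+1) := (h3 _ hq1).symm
    rcases eq_or_ne p d with rfl | hpd
    · calc ht r w' (q+1) = ht r w (q+1) := hq1'
        _ < ht r w e := hL.2.2 e (hed hp)
        _ = ht r w' e := h4
        _ ≤ ht r w' p := h5
    · rw [hq1', ← h3 p hpd]; exact hL.2.2 p hp
  constructor
  · exact key u v hlen hq hht he1 he3
  · exact key v u hlen.symm hq.symm (fun p hp => (hht p hp).symm) he1.symm (he1 ▸ he2)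

include hlen hht he1 he2 he3 in
lemma high_congr (p : ℕ) (hp : u.getD p 0 = v.getD p 0) (hpd : p ≠ d)
    (hed : p < d → p < e) (hee : e ≤ u.length) : (UnpairedHigh r u p ↔ UnpairedHigh r v p) := by
  have key : ∀ (w w' : List ℕ), w.length = w'.length → w.getD p 0 = w'.getD p 0 →
      (∀ x, x ≠ d → ht r w x = ht r w' x) → ht r w e = ht r w' e →
      ht r w' e ≤ ht r w' d → e ≤ w.length →
      UnpairedHigh r w p → UnpairedHigh r w' p := by
    intro w w' h1 h2 h3 h4 h5 h6 hL
    refine ⟨h1 ▸ hL.1, h2 ▸ hL.2.1, fun q hq hpq => ?_⟩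
    have hpp : ht r w' p = ht r w p := (h3 _ hpd).symm
    rcases eq_or_ne q d with rfl | hqd
    · calc ht r w' p = ht r w p := hpp
        _ < ht r w e := hL.2.2 e h6 (hed hpq)
        _ = ht r w' e := h4
        _ ≤ ht r w' q := h5
    · rw [hpp, ← h3 q hqd]; exact hL.2.2 q (h1 ▸ hq) hpq
  constructor
  · exact key u v hlen hp hht he1 he3 hee
  · exact key v u hlen.symm hp.symm (fun x hx => (hht x hx).symm) he1.symm (he1 ▸ he2)
      (hlen ▸ hee)

end congr

section endpoint
variable {r : ℕ} {u v : List ℕ}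

/-- endpoint transport for Low: the unpaired `r` moves right from `q₀` (in `u`) to `q₁` (in `v`) -/
lemma endpoint_low {q₀ q₁ : ℕ} (hq : q₀ ≤ q₁)
    (hlen : q₀ < u.length ↔ q₁ < v.length)
    (hg0 : u.getD q₀ 0 = r) (hg1 : v.getD q₁ 0 = r)
    (hval : ht r u (q₀ + 1) = ht r v (q₁ + 1))
    (heq : ∀ p, p ≤ q₀ → ht r u p = ht r v p)
    (hauto : ∀ p, q₀ < p → p ≤ q₁ → ht r v (q₁ + 1) < ht r v p) :
    UnpairedLow r u q₀ ↔ UnpairedLow r v q₁ := by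
  constructor
  · rintro ⟨h1, _, h3⟩
    refine ⟨hlen.1 h1, hg1, fun p hp => ?_⟩
    rcases Nat.lt_or_ge q₀ p with h | h
    · exact hauto p h hp
    · rw [← heq p h, ← hval]; exact h3 p h
  · rintro ⟨h1, _, h3⟩
    refine ⟨hlen.2 h1, hg0, fun p hp => ?_⟩
    rw [hval, heq p hp]
    exact h3 p (by omega)

/-- endpoint transport for High: the unpaired `r+1` moves right from `p₀` (in `u`) to `p₁` (in `v`);
heights beyond `p₁` agree. -/
lemma endpoint_high {p₀ p₁ : ℕ} (hp : p₀ ≤ p₁)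
    (hlen : u.length = v.length) (hp1 : p₁ < v.length)
    (hg0 : u.getD p₀ 0 = r + 1) (hg1 : v.getD p₁ 0 = r + 1)
    (hval : ht r u p₀ = ht r v p₁)
    (heq : ∀ q, p₁ < q → ht r u q = ht r v q)
    (hauto : ∀ q, p₀ < q → q ≤ p₁ → ht r u p₀ < ht r u q) :
    UnpairedHigh r u p₀ ↔ UnpairedHigh r v p₁ := by
  constructor
  · rintro ⟨h1, _, h3⟩
    refine ⟨hp1, hg1, fun q hq hpq => ?_⟩
    rw [← hval, ← heq q hpq]
    exact h3 q (hlen ▸ hq) (by omega)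
  · rintro ⟨h1, _, h3⟩
    refine ⟨by omega, hg0, fun q hq hpq => ?_⟩
    rcases Nat.lt_or_ge p₁ q with h | h
    · rw [hval, heq q h]; exact h3 q (hlen ▸ hq) h
    · exact hauto q hpq h
end endpoint

section pattern
variable {P Q : ℕ → Prop} {n : ℕ}

lemma none_pattern1 (hiff : ∀ x < n, (P x ↔ Q x)) :
    (∀ b < n, ¬ P b) ↔ (∀ b < n, ¬ Q b) :=
  ⟨fun h b hb hQ => h b hb ((hiff b hb).2 hQ), fun h b hb hP => h b hb ((hiff b hb).1 hP)⟩

lemma fir_pattern1 (hiff : ∀ x < n, (P x ↔ Q x)) {a : ℕ} (h : Fir P n a) : Fir Q n a := by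
  obtain ⟨h1, h2, h3⟩ := h
  exact ⟨h1, (hiff a h1).1 h2, fun b hb hQ => h3 b hb ((hiff b (by omega)).2 hQ)⟩

lemma las_pattern1 (hiff : ∀ x < n, (P x ↔ Q x)) {a : ℕ} (h : Las P n a) : Las Q n a :=
  ⟨h.1, (hiff a h.1).1 h.2.1, fun b hb hbn hQ => h.2.2 b hb hbn ((hiff b hbn).2 hQ)⟩

variable {p₀ p₁ : ℕ}
variable (hiff : ∀ x < n, x ≠ p₀ → x ≠ p₁ → (P x ↔ Q x))
variable (hpq : P p₀ ↔ Q p₁) (hn : p₀ < n ↔ p₁ < n)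
variable (hP1 : p₀ ≠ p₁ → ¬ P p₁) (hQ0 : p₀ ≠ p₁ → ¬ Q p₀)
variable (hbet : ∀ x, min p₀ p₁ < x → x < max p₀ p₁ → ¬ P x ∧ ¬ Q x)

include hiff hpq hn hP1 hQ0 in
lemma none_pattern2 : (∀ b < n, ¬ P b) ↔ (∀ b < n, ¬ Q b) := by
  constructor
  · intro h b hb hQ
    rcases eq_or_ne b p₀ with rfl | h0
    · rcases eq_or_ne b p₁ with heq | h1
      · exact h b hb (hpq.2 (heq ▸ hQ))
      · exact hQ0 h1 hQ
    · rcases eq_or_ne b p₁ with rfl | h1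
      · exact h p₀ (hn.2 hb) (hpq.2 hQ)
      · exact h b hb ((hiff b hb h0 h1).2 hQ)
  · intro h b hb hP
    rcases eq_or_ne b p₀ with rfl | h0
    · exact h p₁ (hn.1 hb) (hpq.1 hP)
    · rcases eq_or_ne b p₁ with rfl | h1
      · exact hP1 (Ne.symm h0) hP
      · exact h b hb ((hiff b hb h0 h1).1 hP)

include hiff hpq hn hP1 hQ0 hbet in
lemma fir_pattern2 {a : ℕ} (h : Fir P n a) :
    Fir Q n (if a = p₀ then p₁ else a) := by
  rcases eq_or_ne p₀ p₁ with rfl | hne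
  · have : (if a = p₀ then p₀ else a) = a := by split <;> omega
    rw [this]
    exact fir_pattern1 (fun x hx => by
      rcases eq_or_ne x p₀ with rfl | hx0
      · exact hpq
      · exact hiff x hx hx0 hx0) h
  obtain ⟨han, hPa, hmin⟩ := h
  by_cases ha0 : a = p₀
  · subst ha0
    rw [if_pos rfl]
    refine ⟨hn.1 han, hpq.1 hPa, fun b hb hQ => ?_⟩
    rcases eq_or_ne b a with rfl | hba
    · exact hQ0 hne hQ
    · rcases eq_or_ne b p₁ with rfl | hb1
      · omega
      · rcases Nat.lt_or_ge b a with h | h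
        · exact hmin b h ((hiff b (by omega) hba hb1).2 hQ)
        · -- a < b < p₁ ; a = p₀
          have h1 : min a p₁ < b := by omega
          have h2 : b < max a p₁ := by omega
          exact (hbet b h1 h2).2 hQ
  · rw [if_neg ha0]
    have ha1 : a ≠ p₁ := by rintro rfl; exact hP1 hne hPa
    refine ⟨han, (hiff a han ha0 ha1).1 hPa, fun b hb hQ => ?_⟩
    rcases eq_or_ne b p₀ with rfl | hb0
    · exact hQ0 hne hQ
    · rcases eq_or_ne b p₁ with rfl | hb1
      · -- b = p₁ < a, need ¬ Q p₁ i.e. ¬ P p₀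
        have hp0 : ¬ P p₀ := by
          rcases Nat.lt_or_ge p₀ a with h | h
          · exact hmin p₀ h
          · -- p₁ < a ≤ p₀, a between
            intro _
            have := hbet a (by omega) (by omega)
            exact this.1 hPa
        exact (hpq.not.1 hp0) hQ
      · exact hmin b hb ((hiff b (by omega) hb0 hb1).2 hQ)

include hiff hpq hn hP1 hQ0 hbet in
lemma las_pattern2 {a : ℕ} (h : Las P n a) :
    Las Q n (if a = p₀ then p₁ else a) := by
  rcases eq_or_ne p₀ p₁ with rfl | hne
  · have heq : (if a = p₀ then p₀ else a) = a := by split <;> omega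
    rw [heq]
    exact las_pattern1 (fun x hx => by
      rcases eq_or_ne x p₀ with rfl | hx0
      · exact hpq
      · exact hiff x hx hx0 hx0) h
  obtain ⟨han, hPa, hmax⟩ := h
  by_cases ha0 : a = p₀
  · subst ha0
    rw [if_pos rfl]
    refine ⟨hn.1 han, hpq.1 hPa, fun b hb hbn hQ => ?_⟩
    rcases eq_or_ne b a with rfl | hba
    · exact hQ0 hne hQ
    · rcases eq_or_ne b p₁ with rfl | hb1
      · omega
      · rcases Nat.lt_or_ge a b with h | h
        · exact hmax b h hbn ((hiff b hbn hba hb1).2 hQ)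
        · -- p₁ < b ≤ a,  b ≠ a so p₁ < b < a = p₀
          have h1 : min a p₁ < b := by omega
          have h2 : b < max a p₁ := by omega
          exact (hbet b h1 h2).2 hQ
  · rw [if_neg ha0]
    have ha1 : a ≠ p₁ := by rintro rfl; exact hP1 hne hPa
    refine ⟨han, (hiff a han ha0 ha1).1 hPa, fun b hb hbn hQ => ?_⟩
    rcases eq_or_ne b p₀ with rfl | hb0
    · exact hQ0 hne hQ
    · rcases eq_or_ne b p₁ with rfl | hb1
      · have hp0 : ¬ P p₀ := by
          rcases Nat.lt_or_ge a p₀ with h | h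
          · intro hP
            exact hmax p₀ h (hn.2 hbn) hP
          · -- p₀ ≤ a, b = p₁ > a ≥ p₀ : a between p₀ and p₁? need ¬P p₀... 
            -- p₀ < p₁ here? p₀ ≤ a < b = p₁ and a ≠ p₀ so p₀ < a < p₁
            intro _
            have := hbet a (by omega) (by omega)
            exact this.1 hPa
        exact (hpq.not.1 hp0) hQ
      · exact hmax b hb hbn ((hiff b hbn hb0 hb1).2 hQ)

end pattern

end StmtAux

namespace StmtAux
open List

/-- `ht` agreement for swapping the first two letters of the window -/
lemma hht_swap12 (r : ℕ) (a b : List ℕ) (x y z : ℕ) :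
    ∀ p, p ≠ a.length + 1 →
      ht r (a ++ [x,y,z] ++ b) p = ht r (a ++ [y,x,z] ++ b) p := by
  intro p hp
  rcases pos_cases a.length p with h | h | h | ⟨δ, h⟩
  · rw [ht_wlow r a b _ _ _ h, ht_wlow r a b _ _ _ h]
  · exact absurd h hp
  · subst h; rw [ht_w2, ht_w2]; ring
  · subst h; rw [ht_w3, ht_w3]; ring

lemma hht_swap23 (r : ℕ) (a b : List ℕ) (x y z : ℕ) :
    ∀ p, p ≠ a.length + 2 →
      ht r (a ++ [x,y,z] ++ b) p = ht r (a ++ [x,z,y] ++ b) p := by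
  intro p hp
  rcases pos_cases a.length p with h | h | h | ⟨δ, h⟩
  · rw [ht_wlow r a b _ _ _ h, ht_wlow r a b _ _ _ h]
  · subst h; rw [ht_w1, ht_w1]
  · exact absurd h hp
  · subst h; rw [ht_w3, ht_w3]; ring

/-- transport of both unpairedness notions at positions outside the window -/
lemma outside_iff (r : ℕ) (a b : List ℕ) (x y z x' y' z' : ℕ) (d e : ℕ)
    (hht : ∀ p, p ≠ d → ht r (a++[x,y,z]++b) p = ht r (a++[x',y',z']++b) p)
    (he1 : ht r (a++[x,y,z]++b) e = ht r (a++[x',y',z']++b) e)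
    (he2 : ht r (a++[x,y,z]++b) e ≤ ht r (a++[x,y,z]++b) d)
    (he3 : ht r (a++[x',y',z']++b) e ≤ ht r (a++[x',y',z']++b) d)
    (hdm : a.length < d) (hd3 : d < a.length + 3)
    (hem : a.length ≤ e) (hee : e ≤ a.length + 3) :
    ∀ p, p < a.length ∨ a.length + 3 ≤ p →
      ((UnpairedHigh r (a++[x,y,z]++b) p ↔ UnpairedHigh r (a++[x',y',z']++b) p) ∧
       (UnpairedLow r (a++[x,y,z]++b) p ↔ UnpairedLow r (a++[x',y',z']++b) p)) := by
  intro p hp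
  have hlen : (a++[x,y,z]++b).length = (a++[x',y',z']++b).length := by
    rw [wlen, wlen]
  have hgd : (a++[x,y,z]++b).getD p 0 = (a++[x',y',z']++b).getD p 0 := by
    rcases hp with h | h
    · rw [getD_wlow a b x y z h, getD_wlow a b x' y' z' h]
    · obtain ⟨δ, rfl⟩ : ∃ δ, p = a.length + 3 + δ := ⟨p - a.length - 3, by omega⟩
      rw [getD_whigh, getD_whigh]
  constructor
  · refine high_congr hlen hht he1 he2 he3 p hgd (by omega) (fun _ => by omega) ?_
    rw [wlen]; omega
  · exact low_congr hlen hht he1 he2 he3 p hgd (by omega) (fun _ => by omega)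

/-- the four-fold transfer property -/
def Transfer (r : ℕ) (u v : List ℕ) : Prop :=
  ((∀ p < u.length, ¬ UnpairedHigh r u p) ↔ (∀ p < v.length, ¬ UnpairedHigh r v p)) ∧
  (∀ p, Fir (UnpairedHigh r u) u.length p →
    ∃ p', Fir (UnpairedHigh r v) v.length p' ∧ KnuthEquiv (u.set p r) (v.set p' r)) ∧
  ((∀ q < u.length, ¬ UnpairedLow r u q) ↔ (∀ q < v.length, ¬ UnpairedLow r v q)) ∧
  (∀ q, Las (UnpairedLow r u) u.length q →
    ∃ q', Las (UnpairedLow r v) v.length q' ∧ KnuthEquiv (u.set q (r+1)) (v.set q' (r+1)))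

lemma eIndex_eq_some {r : ℕ} {u : List ℕ} {p : ℕ} :
    eIndex r u = some p ↔ Fir (UnpairedHigh r u) u.length p := by
  rw [eIndex, head?_filter_range_some]
  simp [Fir, decide_eq_true_eq]

lemma eIndex_eq_none {r : ℕ} {u : List ℕ} :
    eIndex r u = none ↔ ∀ p < u.length, ¬ UnpairedHigh r u p := by
  rw [eIndex, head?_filter_range_none]
  simp [decide_eq_true_eq]

lemma fIndex_eq_some {r : ℕ} {u : List ℕ} {q : ℕ} :
    fIndex r u = some q ↔ Las (UnpairedLow r u) u.length q := by
  rw [fIndex, getLast?_filter_range_some]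
  simp [Las, decide_eq_true_eq]

lemma fIndex_eq_none {r : ℕ} {u : List ℕ} :
    fIndex r u = none ↔ ∀ q < u.length, ¬ UnpairedLow r u q := by
  rw [fIndex, getLast?_filter_range_none]
  simp [decide_eq_true_eq]

def Goal (r : ℕ) (u v : List ℕ) : Prop :=
  ((eOp r u = none ↔ eOp r v = none) ∧
      ∀ u' v', eOp r u = some u' → eOp r v = some v' → KnuthEquiv u' v') ∧
    ((fOp r u = none ↔ fOp r v = none) ∧
      ∀ u' v', fOp r u = some u' → fOp r v = some v' → KnuthEquiv u' v')

lemma goal_of_transfer {r : ℕ} {u v : List ℕ} (h : Transfer r u v) : Goal r u v := by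
  obtain ⟨he1, he2, hf1, hf2⟩ := h
  constructor
  · constructor
    · simp only [eOp, Option.map_eq_none_iff]
      rw [eIndex_eq_none, eIndex_eq_none]
      exact he1
    · intro u' v' hu hv
      simp only [eOp, Option.map_eq_some_iff] at hu hv
      obtain ⟨p, hp, rfl⟩ := hu
      obtain ⟨q, hq, rfl⟩ := hv
      obtain ⟨p', hp', hk⟩ := he2 p (eIndex_eq_some.1 hp)
      have : q = p' := Fir.unique (eIndex_eq_some.1 hq) hp'
      subst this
      exact hk
  · constructor
    · simp only [fOp, Option.map_eq_none_iff]
      rw [fIndex_eq_none, fIndex_eq_none]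
      exact hf1
    · intro u' v' hu hv
      simp only [fOp, Option.map_eq_some_iff] at hu hv
      obtain ⟨p, hp, rfl⟩ := hu
      obtain ⟨q, hq, rfl⟩ := hv
      obtain ⟨p', hp', hk⟩ := hf2 p (fIndex_eq_some.1 hp)
      have : q = p' := Las.unique (fIndex_eq_some.1 hq) hp'
      subst this
      exact hk

lemma goal_refl (r : ℕ) (u : List ℕ) : Goal r u u := by
  refine ⟨⟨Iff.rfl, fun u' v' h1 h2 => ?_⟩, ⟨Iff.rfl, fun u' v' h1 h2 => ?_⟩⟩
  · obtain rfl : u' = v' := by rw [h1] at h2; exact (Option.some.inj h2)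
    exact Relation.EqvGen.refl _
  · obtain rfl : u' = v' := by rw [h1] at h2; exact (Option.some.inj h2)
    exact Relation.EqvGen.refl _

lemma goal_symm {r : ℕ} {u v : List ℕ} (h : Goal r u v) : Goal r v u := by
  obtain ⟨⟨he1, he2⟩, ⟨hf1, hf2⟩⟩ := h
  exact ⟨⟨he1.symm, fun u' v' h1 h2 => Relation.EqvGen.symm _ _ (he2 v' u' h2 h1)⟩,
    ⟨hf1.symm, fun u' v' h1 h2 => Relation.EqvGen.symm _ _ (hf2 v' u' h2 h1)⟩⟩

lemma goal_trans {r : ℕ} {u v w : List ℕ} (huv : Goal r u v) (hvw : Goal r v w) :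
    Goal r u w := by
  obtain ⟨⟨he1, he2⟩, ⟨hf1, hf2⟩⟩ := huv
  obtain ⟨⟨he1', he2'⟩, ⟨hf1', hf2'⟩⟩ := hvw
  constructor
  · refine ⟨he1.trans he1', fun u' w' h1 h2 => ?_⟩
    cases hv : eOp r v with
    | none => rw [he1.2 hv] at h1; exact absurd h1 (by simp)
    | some v' => exact Relation.EqvGen.trans _ _ _ (he2 u' v' h1 hv) (he2' v' w' hv h2)
  · refine ⟨hf1.trans hf1', fun u' w' h1 h2 => ?_⟩
    cases hv : fOp r v with
    | none => rw [hf1.2 hv] at h1; exact absurd h1 (by simp)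
    | some v' => exact Relation.EqvGen.trans _ _ _ (hf2 u' v' h1 hv) (hf2' v' w' hv h2)

section builders
variable {r : ℕ} {u v : List ℕ}

lemma build_high1 (hlen : u.length = v.length)
    (hiff : ∀ x < u.length, (UnpairedHigh r u x ↔ UnpairedHigh r v x))
    (hset : ∀ p, Fir (UnpairedHigh r u) u.length p → KnuthEquiv (u.set p r) (v.set p r)) :
    ((∀ p < u.length, ¬ UnpairedHigh r u p) ↔ (∀ p < v.length, ¬ UnpairedHigh r v p)) ∧
    (∀ p, Fir (UnpairedHigh r u) u.length p →
      ∃ p', Fir (UnpairedHigh r v) v.length p' ∧ KnuthEquiv (u.set p r) (v.set p' r)) := by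
  constructor
  · rw [← hlen]; exact none_pattern1 hiff
  · exact fun p hp => ⟨p, hlen ▸ fir_pattern1 hiff hp, hset p hp⟩

lemma build_low1 (hlen : u.length = v.length)
    (hiff : ∀ x < u.length, (UnpairedLow r u x ↔ UnpairedLow r v x))
    (hset : ∀ q, Las (UnpairedLow r u) u.length q →
      KnuthEquiv (u.set q (r+1)) (v.set q (r+1))) :
    ((∀ q < u.length, ¬ UnpairedLow r u q) ↔ (∀ q < v.length, ¬ UnpairedLow r v q)) ∧
    (∀ q, Las (UnpairedLow r u) u.length q →
      ∃ q', Las (UnpairedLow r v) v.length q' ∧ KnuthEquiv (u.set q (r+1)) (v.set q' (r+1))) := by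
  constructor
  · rw [← hlen]; exact none_pattern1 hiff
  · exact fun q hq => ⟨q, hlen ▸ las_pattern1 hiff hq, hset q hq⟩

variable {p₀ p₁ : ℕ}

lemma build_high2 (hlen : u.length = v.length)
    (hiff : ∀ x < u.length, x ≠ p₀ → x ≠ p₁ → (UnpairedHigh r u x ↔ UnpairedHigh r v x))
    (hpq : UnpairedHigh r u p₀ ↔ UnpairedHigh r v p₁)
    (hn : p₀ < u.length ↔ p₁ < u.length)
    (hP1 : p₀ ≠ p₁ → ¬ UnpairedHigh r u p₁) (hQ0 : p₀ ≠ p₁ → ¬ UnpairedHigh r v p₀)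
    (hbet : ∀ x, min p₀ p₁ < x → x < max p₀ p₁ → ¬ UnpairedHigh r u x ∧ ¬ UnpairedHigh r v x)
    (hset : ∀ p, Fir (UnpairedHigh r u) u.length p →
      KnuthEquiv (u.set p r) (v.set (if p = p₀ then p₁ else p) r)) :
    ((∀ p < u.length, ¬ UnpairedHigh r u p) ↔ (∀ p < v.length, ¬ UnpairedHigh r v p)) ∧
    (∀ p, Fir (UnpairedHigh r u) u.length p →
      ∃ p', Fir (UnpairedHigh r v) v.length p' ∧ KnuthEquiv (u.set p r) (v.set p' r)) := by
  constructor
  · rw [← hlen]; exact none_pattern2 hiff hpq hn hP1 hQ0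
  · exact fun p hp =>
      ⟨if p = p₀ then p₁ else p, hlen ▸ fir_pattern2 hiff hpq hn hP1 hQ0 hbet hp, hset p hp⟩

lemma build_low2 (hlen : u.length = v.length)
    (hiff : ∀ x < u.length, x ≠ p₀ → x ≠ p₁ → (UnpairedLow r u x ↔ UnpairedLow r v x))
    (hpq : UnpairedLow r u p₀ ↔ UnpairedLow r v p₁)
    (hn : p₀ < u.length ↔ p₁ < u.length)
    (hP1 : p₀ ≠ p₁ → ¬ UnpairedLow r u p₁) (hQ0 : p₀ ≠ p₁ → ¬ UnpairedLow r v p₀)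
    (hbet : ∀ x, min p₀ p₁ < x → x < max p₀ p₁ → ¬ UnpairedLow r u x ∧ ¬ UnpairedLow r v x)
    (hset : ∀ q, Las (UnpairedLow r u) u.length q →
      KnuthEquiv (u.set q (r+1)) (v.set (if q = p₀ then p₁ else q) (r+1))) :
    ((∀ q < u.length, ¬ UnpairedLow r u q) ↔ (∀ q < v.length, ¬ UnpairedLow r v q)) ∧
    (∀ q, Las (UnpairedLow r u) u.length q →
      ∃ q', Las (UnpairedLow r v) v.length q' ∧ KnuthEquiv (u.set q (r+1)) (v.set q' (r+1))) := by
  constructor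
  · rw [← hlen]; exact none_pattern2 hiff hpq hn hP1 hQ0
  · exact fun q hq =>
      ⟨if q = p₀ then p₁ else q, hlen ▸ las_pattern2 hiff hpq hn hP1 hQ0 hbet hq, hset q hq⟩

end builders

/-- k1-step with `i = r`, `k ∉ {r, r+1}`: the unpaired-low candidate letter `r`
moves from slot 0 to slot 1. -/
lemma k1_ir (r : ℕ) (a b : List ℕ) (j k : ℕ) (h1 : r ≤ j) (h2 : j < k)
    (hk1 : k ≠ r) (hk2 : k ≠ r + 1) :
    Transfer r (a ++ [r, k, j] ++ b) (a ++ [k, r, j] ++ b) := by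
  have hdlk : dl r k = 0 := dl_other hk1 hk2
  have hlu : (a ++ [r,k,j] ++ b).length = a.length + 3 + b.length := wlen a b r k j
  have hlv : (a ++ [k,r,j] ++ b).length = a.length + 3 + b.length := wlen a b k r j
  have hlen : (a ++ [r,k,j] ++ b).length = (a ++ [k,r,j] ++ b).length := by omega
  have hht := hht_swap12 r a b r k j
  have hu1 : ht r (a ++ [r,k,j] ++ b) (a.length + 1) = ht r a a.length - 1 := by
    rw [ht_w1, dl_r]; ring
  have hv1 : ht r (a ++ [k,r,j] ++ b) (a.length + 1) = ht r a a.length := by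
    rw [ht_w1, hdlk]; ring
  have hu2 : ht r (a ++ [r,k,j] ++ b) (a.length + 2) = ht r a a.length - 1 := by
    rw [ht_w2, dl_r, hdlk]; ring
  have hv2 : ht r (a ++ [k,r,j] ++ b) (a.length + 2) = ht r a a.length - 1 := by
    rw [ht_w2, dl_r, hdlk]; ring
  have hu3 : ∀ δ, ht r (a ++ [r,k,j] ++ b) (a.length + 3 + δ) =
      ht r a a.length - 1 + dl r j + ht r b δ := by
    intro δ; rw [ht_w3, dl_r, hdlk]; ring
  have he1 : ht r (a ++ [r,k,j] ++ b) (a.length+2) = ht r (a ++ [k,r,j] ++ b) (a.length+2) :=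
    hht _ (by omega)
  have he2 : ht r (a ++ [r,k,j] ++ b) (a.length+2) ≤ ht r (a ++ [r,k,j] ++ b) (a.length+1) := by
    rw [hu2, hu1]
  have he3 : ht r (a ++ [k,r,j] ++ b) (a.length+2) ≤ ht r (a ++ [k,r,j] ++ b) (a.length+1) := by
    rw [hv2, hv1]; omega
  have hoiff := outside_iff r a b r k j k r j (a.length+1) (a.length+2) hht he1 he2 he3
    (by omega) (by omega) (by omega) (by omega)
  have hout : ∀ p, (p < a.length ∨ a.length + 3 ≤ p) → ∀ t,
      KnuthEquiv ((a ++ [r,k,j] ++ b).set p t) ((a ++ [k,r,j] ++ b).set p t) := by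
    intro p hp t
    rcases hp with h | h
    · rw [set_wlow a b r k j h t, set_wlow a b k r j h t]
      exact Relation.EqvGen.rel _ _ (KnuthStep.k1 _ b r j k h1 h2)
    · obtain ⟨δ, rfl⟩ : ∃ δ, p = a.length + 3 + δ := ⟨p - a.length - 3, by omega⟩
      rw [set_whigh a b r k j δ t, set_whigh a b k r j δ t]
      exact Relation.EqvGen.rel _ _ (KnuthStep.k1 a _ r j k h1 h2)
  -- High part : pattern 1
  have hiffH : ∀ x < (a ++ [r,k,j] ++ b).length,
      (UnpairedHigh r (a ++ [r,k,j] ++ b) x ↔ UnpairedHigh r (a ++ [k,r,j] ++ b) x) := by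
    intro x hx
    rcases pos_cases a.length x with h | h | h | ⟨δ, h⟩
    · rcases Nat.lt_or_ge x a.length with h' | h'
      · exact (hoiff x (Or.inl h')).1
      · have hxm : x = a.length := by omega
        subst hxm
        exact iff_of_false (notHigh_letter (by rw [getD_w0]; omega))
          (notHigh_letter (by rw [getD_w0]; omega))
    · subst h
      exact iff_of_false (notHigh_letter (by rw [getD_w1]; omega))
        (notHigh_letter (by rw [getD_w1]; omega))
    · subst h
      exact high_congr hlen hht he1 he2 he3 _ (by rw [getD_w2, getD_w2]) (by omega)
        (fun h => by omega) (by omega)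
    · subst h
      exact (hoiff _ (Or.inr (by omega))).1
  have hsetH : ∀ p, Fir (UnpairedHigh r (a ++ [r,k,j] ++ b)) (a ++ [r,k,j] ++ b).length p →
      KnuthEquiv ((a ++ [r,k,j] ++ b).set p r) ((a ++ [k,r,j] ++ b).set p r) := by
    intro p hp
    have hletter := hp.2.1.2.1
    rcases pos_cases a.length p with h | h | h | ⟨δ, h⟩
    · rcases Nat.lt_or_ge p a.length with h' | h'
      · exact hout p (Or.inl h') r
      · have hxm : p = a.length := by omega
        subst hxm
        rw [getD_w0] at hletter; omega
    · subst h; rw [getD_w1] at hletter; omega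
    · subst h
      rw [getD_w2] at hletter
      subst hletter
      rw [set_w2 a b r k _ r, set_w2 a b k r _ r]
      exact Relation.EqvGen.rel _ _ (KnuthStep.k1 a b r r k (le_refl r) (by omega))
    · subst h
      exact hout _ (Or.inr (by omega)) r
  -- Low part : pattern 2, endpoints (m, m+1)
  have hiffL : ∀ x < (a ++ [r,k,j] ++ b).length, x ≠ a.length → x ≠ a.length + 1 →
      (UnpairedLow r (a ++ [r,k,j] ++ b) x ↔ UnpairedLow r (a ++ [k,r,j] ++ b) x) := by
    intro x hx hx0 hx1
    rcases pos_cases a.length x with h | h | h | ⟨δ, h⟩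
    · exact (hoiff x (Or.inl (by omega))).2
    · exact absurd h hx1
    · subst h
      exact low_congr hlen hht he1 he2 he3 _ (by rw [getD_w2, getD_w2]) (by omega)
        (fun _ => by omega)
    · subst h
      exact (hoiff _ (Or.inr (by omega))).2
  have hpq : UnpairedLow r (a ++ [r,k,j] ++ b) a.length ↔
      UnpairedLow r (a ++ [k,r,j] ++ b) (a.length + 1) := by
    refine endpoint_low (by omega) (by omega) (getD_w0 a b r k j) (getD_w1 a b k r j)
      (by rw [hu1, show a.length + 1 + 1 = a.length + 2 from rfl, hv2])
      (fun p hp => hht p (by omega)) ?_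
    intro p hp1 hp2
    have hpm : p = a.length + 1 := by omega
    subst hpm
    rw [show a.length + 1 + 1 = a.length + 2 from rfl, hv2, hv1]; omega
  have hP1 : ¬ UnpairedLow r (a ++ [r,k,j] ++ b) (a.length + 1) :=
    notLow_letter (by rw [getD_w1]; omega)
  have hQ0 : ¬ UnpairedLow r (a ++ [k,r,j] ++ b) a.length :=
    notLow_letter (by rw [getD_w0]; omega)
  have hsetL : ∀ q, Las (UnpairedLow r (a ++ [r,k,j] ++ b)) (a ++ [r,k,j] ++ b).length q →
      KnuthEquiv ((a ++ [r,k,j] ++ b).set q (r+1))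
        ((a ++ [k,r,j] ++ b).set (if q = a.length then a.length + 1 else q) (r+1)) := by
    intro q hq
    have hletter := hq.2.1.2.1
    rcases pos_cases a.length q with h | h | h | ⟨δ, h⟩
    · rcases Nat.lt_or_ge q a.length with h' | h'
      · rw [if_neg (by omega)]
        exact hout q (Or.inl h') (r+1)
      · have hxm : q = a.length := by omega
        subst hxm
        rw [if_pos rfl]
        -- need j ≥ r+1 : else position m+2 would also be unpaired-low, contradicting maximality
        have hj : r + 1 ≤ j := by
          rcases Nat.lt_or_ge j (r+1) with hj' | hj'
          · exfalso
            have hjr : j = r := by omega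
            have hlow2 : UnpairedLow r (a ++ [r,k,j] ++ b) (a.length + 2) := by
              refine ⟨by omega, by rw [getD_w2]; exact hjr, fun p hp => ?_⟩
              have h3 : ht r (a ++ [r,k,j] ++ b) (a.length + 2 + 1) =
                  ht r a a.length - 2 := by
                rw [show a.length + 2 + 1 = a.length + 3 + 0 from rfl, hu3 0, ht_zero, hjr,
                  dl_r]
                ring
              rw [h3]
              rcases pos_cases a.length p with hh | hh | hh | ⟨δ, hh⟩
              · have := hq.2.1.2.2 p hh
                rw [hu1] at this
                rw [ht_wlow r a b _ _ _ hh] at this ⊢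
                omega
              · subst hh; rw [hu1]; omega
              · subst hh; rw [hu2]; omega
              · omega
            exact hq.2.2 (a.length + 2) (by omega) (by omega) hlow2
          · exact hj'
        rw [set_w0 a b r k j (r+1), set_w1 a b k r j (r+1)]
        exact Relation.EqvGen.rel _ _ (KnuthStep.k1 a b (r+1) j k hj h2)
    · subst h; rw [getD_w1] at hletter; omega
    · subst h
      rw [getD_w2] at hletter
      rw [if_neg (by omega), set_w2 a b r k j (r+1), set_w2 a b k r j (r+1)]
      exact Relation.EqvGen.rel _ _ (KnuthStep.k1 a b r (r+1) k (by omega) (by omega))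
    · subst h
      rw [if_neg (by omega)]
      exact hout _ (Or.inr (by omega)) (r+1)
  have H := build_high1 hlen hiffH hsetH
  have L := build_low2 hlen hiffL hpq (by omega) (fun _ => hP1) (fun _ => hQ0)
    (fun x hx1 hx2 => by exfalso; omega) hsetL
  exact ⟨H.1, H.2, L.1, L.2⟩

/-- k1-step with `i, k ∉ {r, r+1}`: heights agree everywhere. -/
lemma k1_none (r : ℕ) (a b : List ℕ) (i j k : ℕ) (h1 : i ≤ j) (h2 : j < k)
    (hi1 : i ≠ r) (hi2 : i ≠ r + 1) (hk1 : k ≠ r) (hk2 : k ≠ r + 1) :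
    Transfer r (a ++ [i, k, j] ++ b) (a ++ [k, i, j] ++ b) := by
  have hdli : dl r i = 0 := dl_other hi1 hi2
  have hdlk : dl r k = 0 := dl_other hk1 hk2
  have hlu : (a ++ [i,k,j] ++ b).length = a.length + 3 + b.length := wlen a b i k j
  have hlv : (a ++ [k,i,j] ++ b).length = a.length + 3 + b.length := wlen a b k i j
  have hlen : (a ++ [i,k,j] ++ b).length = (a ++ [k,i,j] ++ b).length := by omega
  have hht := hht_swap12 r a b i k j
  have hu1 : ht r (a ++ [i,k,j] ++ b) (a.length + 1) = ht r a a.length := by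
    rw [ht_w1, hdli]; ring
  have hv1 : ht r (a ++ [k,i,j] ++ b) (a.length + 1) = ht r a a.length := by
    rw [ht_w1, hdlk]; ring
  have he1 : ht r (a ++ [i,k,j] ++ b) (a.length+1) = ht r (a ++ [k,i,j] ++ b) (a.length+1) := by
    rw [hu1, hv1]
  have hoiff := outside_iff r a b i k j k i j (a.length+1) (a.length+1) hht he1 (le_refl _)
    (le_refl _) (by omega) (by omega) (by omega) (by omega)
  have hout : ∀ p, (p < a.length ∨ a.length + 3 ≤ p) → ∀ t,
      KnuthEquiv ((a ++ [i,k,j] ++ b).set p t) ((a ++ [k,i,j] ++ b).set p t) := by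
    intro p hp t
    rcases hp with h | h
    · rw [set_wlow a b i k j h t, set_wlow a b k i j h t]
      exact Relation.EqvGen.rel _ _ (KnuthStep.k1 _ b i j k h1 h2)
    · obtain ⟨δ, rfl⟩ : ∃ δ, p = a.length + 3 + δ := ⟨p - a.length - 3, by omega⟩
      rw [set_whigh a b i k j δ t, set_whigh a b k i j δ t]
      exact Relation.EqvGen.rel _ _ (KnuthStep.k1 a _ i j k h1 h2)
  have hiffH : ∀ x < (a ++ [i,k,j] ++ b).length,
      (UnpairedHigh r (a ++ [i,k,j] ++ b) x ↔ UnpairedHigh r (a ++ [k,i,j] ++ b) x) := by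
    intro x hx
    rcases pos_cases a.length x with h | h | h | ⟨δ, h⟩
    · rcases Nat.lt_or_ge x a.length with h' | h'
      · exact (hoiff x (Or.inl h')).1
      · have hxm : x = a.length := by omega
        subst hxm
        exact iff_of_false (notHigh_letter (by rw [getD_w0]; omega))
          (notHigh_letter (by rw [getD_w0]; omega))
    · subst h
      exact iff_of_false (notHigh_letter (by rw [getD_w1]; omega))
        (notHigh_letter (by rw [getD_w1]; omega))
    · subst h
      exact high_congr hlen hht he1 (le_refl _) (le_refl _) _ (by rw [getD_w2, getD_w2])
        (by omega) (fun h => by omega) (by omega)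
    · subst h
      exact (hoiff _ (Or.inr (by omega))).1
  have hiffL : ∀ x < (a ++ [i,k,j] ++ b).length,
      (UnpairedLow r (a ++ [i,k,j] ++ b) x ↔ UnpairedLow r (a ++ [k,i,j] ++ b) x) := by
    intro x hx
    rcases pos_cases a.length x with h | h | h | ⟨δ, h⟩
    · rcases Nat.lt_or_ge x a.length with h' | h'
      · exact (hoiff x (Or.inl h')).2
      · have hxm : x = a.length := by omega
        subst hxm
        exact iff_of_false (notLow_letter (by rw [getD_w0]; omega))
          (notLow_letter (by rw [getD_w0]; omega))
    · subst h
      exact iff_of_false (notLow_letter (by rw [getD_w1]; omega))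
        (notLow_letter (by rw [getD_w1]; omega))
    · subst h
      exact low_congr hlen hht he1 (le_refl _) (le_refl _) _ (by rw [getD_w2, getD_w2])
        (by omega) (fun _ => by omega)
    · subst h
      exact (hoiff _ (Or.inr (by omega))).2
  have hsetH : ∀ p, Fir (UnpairedHigh r (a ++ [i,k,j] ++ b)) (a ++ [i,k,j] ++ b).length p →
      KnuthEquiv ((a ++ [i,k,j] ++ b).set p r) ((a ++ [k,i,j] ++ b).set p r) := by
    intro p hp
    have hletter := hp.2.1.2.1
    rcases pos_cases a.length p with h | h | h | ⟨δ, h⟩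
    · rcases Nat.lt_or_ge p a.length with h' | h'
      · exact hout p (Or.inl h') r
      · have hxm : p = a.length := by omega
        subst hxm
        rw [getD_w0] at hletter; omega
    · subst h; rw [getD_w1] at hletter; omega
    · subst h
      rw [getD_w2] at hletter
      rw [set_w2 a b i k j r, set_w2 a b k i j r]
      exact Relation.EqvGen.rel _ _ (KnuthStep.k1 a b i r k (by omega) (by omega))
    · subst h
      exact hout _ (Or.inr (by omega)) r
  have hsetL : ∀ q, Las (UnpairedLow r (a ++ [i,k,j] ++ b)) (a ++ [i,k,j] ++ b).length q →
      KnuthEquiv ((a ++ [i,k,j] ++ b).set q (r+1)) ((a ++ [k,i,j] ++ b).set q (r+1)) := by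
    intro q hq
    have hletter := hq.2.1.2.1
    rcases pos_cases a.length q with h | h | h | ⟨δ, h⟩
    · rcases Nat.lt_or_ge q a.length with h' | h'
      · exact hout q (Or.inl h') (r+1)
      · have hxm : q = a.length := by omega
        subst hxm
        rw [getD_w0] at hletter; omega
    · subst h; rw [getD_w1] at hletter; omega
    · subst h
      rw [getD_w2] at hletter
      rw [set_w2 a b i k j (r+1), set_w2 a b k i j (r+1)]
      exact Relation.EqvGen.rel _ _ (KnuthStep.k1 a b i (r+1) k (by omega) (by omega))
    · subst h
      exact hout _ (Or.inr (by omega)) (r+1)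
  have H := build_high1 hlen hiffH hsetH
  have L := build_low1 hlen hiffL hsetL
  exact ⟨H.1, H.2, L.1, L.2⟩

/-- k1-step with `i = r+1` (hence `k ≥ r+2`): the unpaired-high candidate moves
from slot 0 to slot 1. -/
lemma k1_ir1 (r : ℕ) (a b : List ℕ) (j k : ℕ) (h1 : r + 1 ≤ j) (h2 : j < k) :
    Transfer r (a ++ [r+1, k, j] ++ b) (a ++ [k, r+1, j] ++ b) := by
  have hk1 : k ≠ r := by omega
  have hk2 : k ≠ r + 1 := by omega
  have hdlk : dl r k = 0 := dl_other hk1 hk2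
  have hlu : (a ++ [r+1,k,j] ++ b).length = a.length + 3 + b.length := wlen a b (r+1) k j
  have hlv : (a ++ [k,r+1,j] ++ b).length = a.length + 3 + b.length := wlen a b k (r+1) j
  have hlen : (a ++ [r+1,k,j] ++ b).length = (a ++ [k,r+1,j] ++ b).length := by omega
  have hht := hht_swap12 r a b (r+1) k j
  have hu0 : ht r (a ++ [r+1,k,j] ++ b) a.length = ht r a a.length := ht_w0 r a b (r+1) k j
  have hv0 : ht r (a ++ [k,r+1,j] ++ b) a.length = ht r a a.length := ht_w0 r a b k (r+1) j
  have hu1 : ht r (a ++ [r+1,k,j] ++ b) (a.length + 1) = ht r a a.length + 1 := by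
    rw [ht_w1, dl_r1]
  have hv1 : ht r (a ++ [k,r+1,j] ++ b) (a.length + 1) = ht r a a.length := by
    rw [ht_w1, hdlk]; ring
  have hu2 : ht r (a ++ [r+1,k,j] ++ b) (a.length + 2) = ht r a a.length + 1 := by
    rw [ht_w2, dl_r1, hdlk]; ring
  have hu3 : ∀ δ, ht r (a ++ [r+1,k,j] ++ b) (a.length + 3 + δ) =
      ht r a a.length + 1 + dl r j + ht r b δ := by
    intro δ; rw [ht_w3, dl_r1, hdlk]; ring
  have he1 : ht r (a ++ [r+1,k,j] ++ b) a.length = ht r (a ++ [k,r+1,j] ++ b) a.length :=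
    hht _ (by omega)
  have he2 : ht r (a ++ [r+1,k,j] ++ b) a.length ≤ ht r (a ++ [r+1,k,j] ++ b) (a.length+1) := by
    rw [hu0, hu1]; omega
  have he3 : ht r (a ++ [k,r+1,j] ++ b) a.length ≤ ht r (a ++ [k,r+1,j] ++ b) (a.length+1) := by
    rw [hv0, hv1]
  have hoiff := outside_iff r a b (r+1) k j k (r+1) j (a.length+1) a.length hht he1 he2 he3
    (by omega) (by omega) (by omega) (by omega)
  have hout : ∀ p, (p < a.length ∨ a.length + 3 ≤ p) → ∀ t,
      KnuthEquiv ((a ++ [r+1,k,j] ++ b).set p t) ((a ++ [k,r+1,j] ++ b).set p t) := by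
    intro p hp t
    rcases hp with h | h
    · rw [set_wlow a b (r+1) k j h t, set_wlow a b k (r+1) j h t]
      exact Relation.EqvGen.rel _ _ (KnuthStep.k1 _ b (r+1) j k h1 h2)
    · obtain ⟨δ, rfl⟩ : ∃ δ, p = a.length + 3 + δ := ⟨p - a.length - 3, by omega⟩
      rw [set_whigh a b (r+1) k j δ t, set_whigh a b k (r+1) j δ t]
      exact Relation.EqvGen.rel _ _ (KnuthStep.k1 a _ (r+1) j k h1 h2)
  -- High part : pattern 2 with endpoints (m, m+1)
  have hiffH : ∀ x < (a ++ [r+1,k,j] ++ b).length, x ≠ a.length → x ≠ a.length + 1 →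
      (UnpairedHigh r (a ++ [r+1,k,j] ++ b) x ↔ UnpairedHigh r (a ++ [k,r+1,j] ++ b) x) := by
    intro x hx hx0 hx1
    rcases pos_cases a.length x with h | h | h | ⟨δ, h⟩
    · exact (hoiff x (Or.inl (by omega))).1
    · exact absurd h hx1
    · subst h
      exact high_congr hlen hht he1 he2 he3 _ (by rw [getD_w2, getD_w2]) (by omega)
        (fun h => by omega) (by omega)
    · subst h
      exact (hoiff _ (Or.inr (by omega))).1
  have hpq : UnpairedHigh r (a ++ [r+1,k,j] ++ b) a.length ↔
      UnpairedHigh r (a ++ [k,r+1,j] ++ b) (a.length + 1) := by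
    refine endpoint_high (by omega) hlen (by omega) (getD_w0 a b (r+1) k j)
      (getD_w1 a b k (r+1) j) (by rw [hu0, hv1]) (fun q hq => hht q (by omega)) ?_
    intro q hq1 hq2
    have hqm : q = a.length + 1 := by omega
    subst hqm
    rw [hu0, hu1]; omega
  have hP1 : ¬ UnpairedHigh r (a ++ [r+1,k,j] ++ b) (a.length + 1) :=
    notHigh_letter (by rw [getD_w1]; omega)
  have hQ0 : ¬ UnpairedHigh r (a ++ [k,r+1,j] ++ b) a.length :=
    notHigh_letter (by rw [getD_w0]; omega)
  have hsetH : ∀ p, Fir (UnpairedHigh r (a ++ [r+1,k,j] ++ b)) (a ++ [r+1,k,j] ++ b).length p →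
      KnuthEquiv ((a ++ [r+1,k,j] ++ b).set p r)
        ((a ++ [k,r+1,j] ++ b).set (if p = a.length then a.length + 1 else p) r) := by
    intro p hp
    have hletter := hp.2.1.2.1
    rcases pos_cases a.length p with h | h | h | ⟨δ, h⟩
    · rcases Nat.lt_or_ge p a.length with h' | h'
      · rw [if_neg (by omega)]
        exact hout p (Or.inl h') r
      · have hxm : p = a.length := by omega
        subst hxm
        rw [if_pos rfl, set_w0 a b (r+1) k j r, set_w1 a b k (r+1) j r]
        exact Relation.EqvGen.rel _ _ (KnuthStep.k1 a b r j k (by omega) h2)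
    · subst h; rw [getD_w1] at hletter; omega
    · subst h
      rw [getD_w2] at hletter
      -- j = r+1 : then position m would also be unpaired-high, contradicting minimality
      exfalso
      have hhighm : UnpairedHigh r (a ++ [r+1,k,j] ++ b) a.length := by
        refine ⟨by omega, getD_w0 a b (r+1) k j, fun q hq hmq => ?_⟩
        rw [hu0]
        rcases pos_cases a.length q with hh | hh | hh | ⟨δ, hh⟩
        · omega
        · subst hh; rw [hu1]; omega
        · subst hh; rw [hu2]; omega
        · subst hh
          have := hp.2.1.2.2 (a.length + 3 + δ) (by omega) (by omega)
          rw [hu2] at this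
          omega
      exact hp.2.2 a.length (by omega) hhighm
    · subst h
      rw [if_neg (by omega)]
      exact hout _ (Or.inr (by omega)) r
  -- Low part : pattern 1
  have hiffL : ∀ x < (a ++ [r+1,k,j] ++ b).length,
      (UnpairedLow r (a ++ [r+1,k,j] ++ b) x ↔ UnpairedLow r (a ++ [k,r+1,j] ++ b) x) := by
    intro x hx
    rcases pos_cases a.length x with h | h | h | ⟨δ, h⟩
    · rcases Nat.lt_or_ge x a.length with h' | h'
      · exact (hoiff x (Or.inl h')).2
      · have hxm : x = a.length := by omega
        subst hxm
        exact iff_of_false (notLow_letter (by rw [getD_w0]; omega))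
          (notLow_letter (by rw [getD_w0]; omega))
    · subst h
      exact iff_of_false (notLow_letter (by rw [getD_w1]; omega))
        (notLow_letter (by rw [getD_w1]; omega))
    · subst h
      exact low_congr hlen hht he1 he2 he3 _ (by rw [getD_w2, getD_w2]) (by omega)
        (fun _ => by omega)
    · subst h
      exact (hoiff _ (Or.inr (by omega))).2
  have hsetL : ∀ q, Las (UnpairedLow r (a ++ [r+1,k,j] ++ b)) (a ++ [r+1,k,j] ++ b).length q →
      KnuthEquiv ((a ++ [r+1,k,j] ++ b).set q (r+1)) ((a ++ [k,r+1,j] ++ b).set q (r+1)) := by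
    intro q hq
    have hletter := hq.2.1.2.1
    rcases pos_cases a.length q with h | h | h | ⟨δ, h⟩
    · rcases Nat.lt_or_ge q a.length with h' | h'
      · exact hout q (Or.inl h') (r+1)
      · have hxm : q = a.length := by omega
        subst hxm
        rw [getD_w0] at hletter; omega
    · subst h; rw [getD_w1] at hletter; omega
    · subst h; rw [getD_w2] at hletter; omega
    · subst h
      exact hout _ (Or.inr (by omega)) (r+1)
  have H := build_high2 hlen hiffH hpq (by omega) (fun _ => hP1) (fun _ => hQ0)
    (fun x hx1 hx2 => by exfalso; omega) hsetH
  have L := build_low1 hlen hiffL hsetL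
  exact ⟨H.1, H.2, L.1, L.2⟩

/-- k1-step with `k = r` (hence `i ≤ j < r`): the unpaired-low candidate moves
from slot 1 to slot 0. -/
lemma k1_kr (r : ℕ) (a b : List ℕ) (i j : ℕ) (h1 : i ≤ j) (h2 : j < r) :
    Transfer r (a ++ [i, r, j] ++ b) (a ++ [r, i, j] ++ b) := by
  have hdli : dl r i = 0 := dl_other (by omega) (by omega)
  have hdlj : dl r j = 0 := dl_other (by omega) (by omega)
  have hlu : (a ++ [i,r,j] ++ b).length = a.length + 3 + b.length := wlen a b i r j
  have hlv : (a ++ [r,i,j] ++ b).length = a.length + 3 + b.length := wlen a b r i j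
  have hlen : (a ++ [i,r,j] ++ b).length = (a ++ [r,i,j] ++ b).length := by omega
  have hht := hht_swap12 r a b i r j
  have hu1 : ht r (a ++ [i,r,j] ++ b) (a.length + 1) = ht r a a.length := by
    rw [ht_w1, hdli]; ring
  have hv1 : ht r (a ++ [r,i,j] ++ b) (a.length + 1) = ht r a a.length - 1 := by
    rw [ht_w1, dl_r]; ring
  have hu2 : ht r (a ++ [i,r,j] ++ b) (a.length + 2) = ht r a a.length - 1 := by
    rw [ht_w2, hdli, dl_r]; ring
  have he1 : ht r (a ++ [i,r,j] ++ b) (a.length+2) = ht r (a ++ [r,i,j] ++ b) (a.length+2) :=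
    hht _ (by omega)
  have he2 : ht r (a ++ [i,r,j] ++ b) (a.length+2) ≤ ht r (a ++ [i,r,j] ++ b) (a.length+1) := by
    rw [hu2, hu1]; omega
  have he3 : ht r (a ++ [r,i,j] ++ b) (a.length+2) ≤ ht r (a ++ [r,i,j] ++ b) (a.length+1) := by
    rw [← he1, hu2, hv1]
  have hoiff := outside_iff r a b i r j r i j (a.length+1) (a.length+2) hht he1 he2 he3
    (by omega) (by omega) (by omega) (by omega)
  have hout : ∀ p, (p < a.length ∨ a.length + 3 ≤ p) → ∀ t,
      KnuthEquiv ((a ++ [i,r,j] ++ b).set p t) ((a ++ [r,i,j] ++ b).set p t) := by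
    intro p hp t
    rcases hp with h | h
    · rw [set_wlow a b i r j h t, set_wlow a b r i j h t]
      exact Relation.EqvGen.rel _ _ (KnuthStep.k1 _ b i j r h1 h2)
    · obtain ⟨δ, rfl⟩ : ∃ δ, p = a.length + 3 + δ := ⟨p - a.length - 3, by omega⟩
      rw [set_whigh a b i r j δ t, set_whigh a b r i j δ t]
      exact Relation.EqvGen.rel _ _ (KnuthStep.k1 a _ i j r h1 h2)
  have hiffH : ∀ x < (a ++ [i,r,j] ++ b).length,
      (UnpairedHigh r (a ++ [i,r,j] ++ b) x ↔ UnpairedHigh r (a ++ [r,i,j] ++ b) x) := by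
    intro x hx
    rcases pos_cases a.length x with h | h | h | ⟨δ, h⟩
    · rcases Nat.lt_or_ge x a.length with h' | h'
      · exact (hoiff x (Or.inl h')).1
      · have hxm : x = a.length := by omega
        subst hxm
        exact iff_of_false (notHigh_letter (by rw [getD_w0]; omega))
          (notHigh_letter (by rw [getD_w0]; omega))
    · subst h
      exact iff_of_false (notHigh_letter (by rw [getD_w1]; omega))
        (notHigh_letter (by rw [getD_w1]; omega))
    · subst h
      exact iff_of_false (notHigh_letter (by rw [getD_w2]; omega))
        (notHigh_letter (by rw [getD_w2]; omega))
    · subst h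
      exact (hoiff _ (Or.inr (by omega))).1
  have hsetH : ∀ p, Fir (UnpairedHigh r (a ++ [i,r,j] ++ b)) (a ++ [i,r,j] ++ b).length p →
      KnuthEquiv ((a ++ [i,r,j] ++ b).set p r) ((a ++ [r,i,j] ++ b).set p r) := by
    intro p hp
    have hletter := hp.2.1.2.1
    rcases pos_cases a.length p with h | h | h | ⟨δ, h⟩
    · rcases Nat.lt_or_ge p a.length with h' | h'
      · exact hout p (Or.inl h') r
      · have hxm : p = a.length := by omega
        subst hxm
        rw [getD_w0] at hletter; omega
    · subst h; rw [getD_w1] at hletter; omega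
    · subst h; rw [getD_w2] at hletter; omega
    · subst h
      exact hout _ (Or.inr (by omega)) r
  -- Low part : pattern 2 with endpoints (m+1, m)
  have hiffL : ∀ x < (a ++ [i,r,j] ++ b).length, x ≠ a.length + 1 → x ≠ a.length →
      (UnpairedLow r (a ++ [i,r,j] ++ b) x ↔ UnpairedLow r (a ++ [r,i,j] ++ b) x) := by
    intro x hx hx1 hx0
    rcases pos_cases a.length x with h | h | h | ⟨δ, h⟩
    · exact (hoiff x (Or.inl (by omega))).2
    · exact absurd h hx1
    · subst h
      exact iff_of_false (notLow_letter (by rw [getD_w2]; omega))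
        (notLow_letter (by rw [getD_w2]; omega))
    · subst h
      exact (hoiff _ (Or.inr (by omega))).2
  have hpq : UnpairedLow r (a ++ [i,r,j] ++ b) (a.length + 1) ↔
      UnpairedLow r (a ++ [r,i,j] ++ b) a.length := by
    refine (endpoint_low (u := a ++ [r,i,j] ++ b) (v := a ++ [i,r,j] ++ b) (by omega)
      (by omega) (getD_w0 a b r i j) (getD_w1 a b i r j)
      (by rw [hv1, show a.length + 1 + 1 = a.length + 2 from rfl, hu2])
      (fun p hp => (hht p (by omega)).symm) ?_).symm
    intro p hp1 hp2
    have hpm : p = a.length + 1 := by omega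
    subst hpm
    rw [show a.length + 1 + 1 = a.length + 2 from rfl, hu2, hu1]; omega
  have hP1 : ¬ UnpairedLow r (a ++ [i,r,j] ++ b) a.length :=
    notLow_letter (by rw [getD_w0]; omega)
  have hQ0 : ¬ UnpairedLow r (a ++ [r,i,j] ++ b) (a.length + 1) :=
    notLow_letter (by rw [getD_w1]; omega)
  have hsetL : ∀ q, Las (UnpairedLow r (a ++ [i,r,j] ++ b)) (a ++ [i,r,j] ++ b).length q →
      KnuthEquiv ((a ++ [i,r,j] ++ b).set q (r+1))
        ((a ++ [r,i,j] ++ b).set (if q = a.length + 1 then a.length else q) (r+1)) := by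
    intro q hq
    have hletter := hq.2.1.2.1
    rcases pos_cases a.length q with h | h | h | ⟨δ, h⟩
    · rcases Nat.lt_or_ge q a.length with h' | h'
      · rw [if_neg (by omega)]
        exact hout q (Or.inl h') (r+1)
      · have hxm : q = a.length := by omega
        subst hxm
        rw [getD_w0] at hletter; omega
    · subst h
      rw [if_pos rfl, set_w1 a b i r j (r+1), set_w0 a b r i j (r+1)]
      exact Relation.EqvGen.rel _ _ (KnuthStep.k1 a b i j (r+1) h1 (by omega))
    · subst h; rw [getD_w2] at hletter; omega
    · subst h
      rw [if_neg (by omega)]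
      exact hout _ (Or.inr (by omega)) (r+1)
  have H := build_high1 hlen hiffH hsetH
  have L := build_low2 hlen hiffL hpq (by omega) (fun _ => hP1) (fun _ => hQ0)
    (fun x hx1 hx2 => by exfalso; omega) hsetL
  exact ⟨H.1, H.2, L.1, L.2⟩

/-- k1-step with `k = r+1`, `i ∉ {r, r+1}` (hence `i < r`, `j ≤ r`): the unpaired-high
candidate moves from slot 1 to slot 0. -/
lemma k1_kr1 (r : ℕ) (a b : List ℕ) (i j : ℕ) (h1 : i ≤ j) (h2 : j ≤ r) (hi1 : i ≠ r) :
    Transfer r (a ++ [i, r+1, j] ++ b) (a ++ [r+1, i, j] ++ b) := by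
  have hdli : dl r i = 0 := dl_other hi1 (by omega)
  have hlu : (a ++ [i,r+1,j] ++ b).length = a.length + 3 + b.length := wlen a b i (r+1) j
  have hlv : (a ++ [r+1,i,j] ++ b).length = a.length + 3 + b.length := wlen a b (r+1) i j
  have hlen : (a ++ [i,r+1,j] ++ b).length = (a ++ [r+1,i,j] ++ b).length := by omega
  have hht := hht_swap12 r a b i (r+1) j
  have hu0 : ht r (a ++ [i,r+1,j] ++ b) a.length = ht r a a.length := ht_w0 r a b i (r+1) j
  have hv0 : ht r (a ++ [r+1,i,j] ++ b) a.length = ht r a a.length := ht_w0 r a b (r+1) i j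
  have hu1 : ht r (a ++ [i,r+1,j] ++ b) (a.length + 1) = ht r a a.length := by
    rw [ht_w1, hdli]; ring
  have hv1 : ht r (a ++ [r+1,i,j] ++ b) (a.length + 1) = ht r a a.length + 1 := by
    rw [ht_w1, dl_r1]
  have hu2 : ht r (a ++ [i,r+1,j] ++ b) (a.length + 2) = ht r a a.length + 1 := by
    rw [ht_w2, hdli, dl_r1]; ring
  have hu3 : ∀ δ, ht r (a ++ [i,r+1,j] ++ b) (a.length + 3 + δ) =
      ht r a a.length + 1 + dl r j + ht r b δ := by
    intro δ; rw [ht_w3, hdli, dl_r1]; ring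
  have he1 : ht r (a ++ [i,r+1,j] ++ b) a.length = ht r (a ++ [r+1,i,j] ++ b) a.length :=
    hht _ (by omega)
  have he2 : ht r (a ++ [i,r+1,j] ++ b) a.length ≤ ht r (a ++ [i,r+1,j] ++ b) (a.length+1) := by
    rw [hu0, hu1]
  have he3 : ht r (a ++ [r+1,i,j] ++ b) a.length ≤ ht r (a ++ [r+1,i,j] ++ b) (a.length+1) := by
    rw [hv0, hv1]; omega
  have hoiff := outside_iff r a b i (r+1) j (r+1) i j (a.length+1) a.length hht he1 he2 he3
    (by omega) (by omega) (by omega) (by omega)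
  have hout : ∀ p, (p < a.length ∨ a.length + 3 ≤ p) → ∀ t,
      KnuthEquiv ((a ++ [i,r+1,j] ++ b).set p t) ((a ++ [r+1,i,j] ++ b).set p t) := by
    intro p hp t
    rcases hp with h | h
    · rw [set_wlow a b i (r+1) j h t, set_wlow a b (r+1) i j h t]
      exact Relation.EqvGen.rel _ _ (KnuthStep.k1 _ b i j (r+1) h1 (by omega))
    · obtain ⟨δ, rfl⟩ : ∃ δ, p = a.length + 3 + δ := ⟨p - a.length - 3, by omega⟩
      rw [set_whigh a b i (r+1) j δ t, set_whigh a b (r+1) i j δ t]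
      exact Relation.EqvGen.rel _ _ (KnuthStep.k1 a _ i j (r+1) h1 (by omega))
  -- High part : pattern 2 with endpoints (m+1, m)
  have hiffH : ∀ x < (a ++ [i,r+1,j] ++ b).length, x ≠ a.length + 1 → x ≠ a.length →
      (UnpairedHigh r (a ++ [i,r+1,j] ++ b) x ↔ UnpairedHigh r (a ++ [r+1,i,j] ++ b) x) := by
    intro x hx hx1 hx0
    rcases pos_cases a.length x with h | h | h | ⟨δ, h⟩
    · exact (hoiff x (Or.inl (by omega))).1
    · exact absurd h hx1
    · subst h
      exact iff_of_false (notHigh_letter (by rw [getD_w2]; omega))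
        (notHigh_letter (by rw [getD_w2]; omega))
    · subst h
      exact (hoiff _ (Or.inr (by omega))).1
  have hpq : UnpairedHigh r (a ++ [i,r+1,j] ++ b) (a.length + 1) ↔
      UnpairedHigh r (a ++ [r+1,i,j] ++ b) a.length := by
    refine (endpoint_high (u := a ++ [r+1,i,j] ++ b) (v := a ++ [i,r+1,j] ++ b) (by omega)
      hlen.symm (by omega) (getD_w0 a b (r+1) i j) (getD_w1 a b i (r+1) j)
      (by rw [hv0, hu1]) (fun q hq => (hht q (by omega)).symm) ?_).symm
    intro q hq1 hq2
    have hqm : q = a.length + 1 := by omega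
    subst hqm
    rw [hv0, hv1]; omega
  have hP1 : ¬ UnpairedHigh r (a ++ [i,r+1,j] ++ b) a.length :=
    notHigh_letter (by rw [getD_w0]; omega)
  have hQ0 : ¬ UnpairedHigh r (a ++ [r+1,i,j] ++ b) (a.length + 1) :=
    notHigh_letter (by rw [getD_w1]; omega)
  have hsetH : ∀ p, Fir (UnpairedHigh r (a ++ [i,r+1,j] ++ b)) (a ++ [i,r+1,j] ++ b).length p →
      KnuthEquiv ((a ++ [i,r+1,j] ++ b).set p r)
        ((a ++ [r+1,i,j] ++ b).set (if p = a.length + 1 then a.length else p) r) := by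
    intro p hp
    have hletter := hp.2.1.2.1
    rcases pos_cases a.length p with h | h | h | ⟨δ, h⟩
    · rcases Nat.lt_or_ge p a.length with h' | h'
      · rw [if_neg (by omega)]
        exact hout p (Or.inl h') r
      · have hxm : p = a.length := by omega
        subst hxm
        rw [getD_w0] at hletter; omega
    · subst h
      -- need j < r : if j = r then slot 2 kills the height condition
      have hj : j < r := by
        rcases Nat.lt_or_ge j r with hj' | hj'
        · exact hj'
        · exfalso
          have hjr : j = r := by omega
          refine notHigh_le (show a.length + 1 < a.length + 3 + 0 by omega) (by omega) ?_
            hp.2.1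
          rw [hu1, hu3 0, ht_zero, hjr, dl_r]
          omega
      rw [if_pos rfl, set_w1 a b i (r+1) j r, set_w0 a b (r+1) i j r]
      exact Relation.EqvGen.rel _ _ (KnuthStep.k1 a b i j r h1 hj)
    · subst h; rw [getD_w2] at hletter; omega
    · subst h
      rw [if_neg (by omega)]
      exact hout _ (Or.inr (by omega)) r
  -- Low part : pattern 1
  have hiffL : ∀ x < (a ++ [i,r+1,j] ++ b).length,
      (UnpairedLow r (a ++ [i,r+1,j] ++ b) x ↔ UnpairedLow r (a ++ [r+1,i,j] ++ b) x) := by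
    intro x hx
    rcases pos_cases a.length x with h | h | h | ⟨δ, h⟩
    · rcases Nat.lt_or_ge x a.length with h' | h'
      · exact (hoiff x (Or.inl h')).2
      · have hxm : x = a.length := by omega
        subst hxm
        exact iff_of_false (notLow_letter (by rw [getD_w0]; omega))
          (notLow_letter (by rw [getD_w0]; omega))
    · subst h
      exact iff_of_false (notLow_letter (by rw [getD_w1]; omega))
        (notLow_letter (by rw [getD_w1]; omega))
    · subst h
      exact low_congr hlen hht he1 he2 he3 _ (by rw [getD_w2, getD_w2]) (by omega)
        (fun _ => by omega)
    · subst h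
      exact (hoiff _ (Or.inr (by omega))).2
  have hsetL : ∀ q, Las (UnpairedLow r (a ++ [i,r+1,j] ++ b)) (a ++ [i,r+1,j] ++ b).length q →
      KnuthEquiv ((a ++ [i,r+1,j] ++ b).set q (r+1)) ((a ++ [r+1,i,j] ++ b).set q (r+1)) := by
    intro q hq
    have hletter := hq.2.1.2.1
    rcases pos_cases a.length q with h | h | h | ⟨δ, h⟩
    · rcases Nat.lt_or_ge q a.length with h' | h'
      · exact hout q (Or.inl h') (r+1)
      · have hxm : q = a.length := by omega
        subst hxm
        rw [getD_w0] at hletter; omega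
    · subst h; rw [getD_w1] at hletter; omega
    · subst h
      -- j = r and k = r+1 : slot 2 can never be unpaired-low
      exfalso
      rw [getD_w2] at hletter
      refine notLow_ge (show a.length + 1 ≤ a.length + 2 by omega) ?_ hq.2.1
      rw [hu1, show a.length + 2 + 1 = a.length + 3 + 0 from rfl, hu3 0, ht_zero, hletter,
        dl_r]
      omega
    · subst h
      exact hout _ (Or.inr (by omega)) (r+1)
  have H := build_high2 hlen hiffH hpq (by omega) (fun _ => hP1) (fun _ => hQ0)
    (fun x hx1 hx2 => by exfalso; omega) hsetH
  have L := build_low1 hlen hiffL hsetL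
  exact ⟨H.1, H.2, L.1, L.2⟩

/-- the hard k1-step: `i = r`, `k = r+1`, `j = r`. -/
lemma k1_hard (r : ℕ) (a b : List ℕ) :
    Transfer r (a ++ [r, r+1, r] ++ b) (a ++ [r+1, r, r] ++ b) := by
  have hlu : (a ++ [r,r+1,r] ++ b).length = a.length + 3 + b.length := wlen a b r (r+1) r
  have hlv : (a ++ [r+1,r,r] ++ b).length = a.length + 3 + b.length := wlen a b (r+1) r r
  have hlen : (a ++ [r,r+1,r] ++ b).length = (a ++ [r+1,r,r] ++ b).length := by omega
  have hht := hht_swap12 r a b r (r+1) r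
  have hu0 : ht r (a ++ [r,r+1,r] ++ b) a.length = ht r a a.length := ht_w0 r a b r (r+1) r
  have hv0 : ht r (a ++ [r+1,r,r] ++ b) a.length = ht r a a.length := ht_w0 r a b (r+1) r r
  have hu1 : ht r (a ++ [r,r+1,r] ++ b) (a.length + 1) = ht r a a.length - 1 := by
    rw [ht_w1, dl_r]; ring
  have hv1 : ht r (a ++ [r+1,r,r] ++ b) (a.length + 1) = ht r a a.length + 1 := by
    rw [ht_w1, dl_r1]
  have hu2 : ht r (a ++ [r,r+1,r] ++ b) (a.length + 2) = ht r a a.length := by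
    rw [ht_w2, dl_r, dl_r1]; ring
  have hv2 : ht r (a ++ [r+1,r,r] ++ b) (a.length + 2) = ht r a a.length := by
    rw [ht_w2, dl_r, dl_r1]; ring
  have hu3 : ∀ δ, ht r (a ++ [r,r+1,r] ++ b) (a.length + 3 + δ) =
      ht r a a.length - 1 + ht r b δ := by
    intro δ; rw [ht_w3, dl_r, dl_r1]; ring
  have hv3 : ∀ δ, ht r (a ++ [r+1,r,r] ++ b) (a.length + 3 + δ) =
      ht r a a.length - 1 + ht r b δ := by
    intro δ; rw [ht_w3, dl_r, dl_r1]; ring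
  have he1 : ht r (a ++ [r,r+1,r] ++ b) (a.length+3) = ht r (a ++ [r+1,r,r] ++ b)
      (a.length+3) := hht _ (by omega)
  have he2 : ht r (a ++ [r,r+1,r] ++ b) (a.length+3) ≤
      ht r (a ++ [r,r+1,r] ++ b) (a.length+1) := by
    rw [show a.length + 3 = a.length + 3 + 0 from rfl, hu3 0, ht_zero, hu1]; omega
  have he3 : ht r (a ++ [r+1,r,r] ++ b) (a.length+3) ≤
      ht r (a ++ [r+1,r,r] ++ b) (a.length+1) := by
    rw [show a.length + 3 = a.length + 3 + 0 from rfl, hv3 0, ht_zero, hv1]; omega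
  have hoiff := outside_iff r a b r (r+1) r (r+1) r r (a.length+1) (a.length+3) hht he1 he2 he3
    (by omega) (by omega) (by omega) (by omega)
  have hout : ∀ p, (p < a.length ∨ a.length + 3 ≤ p) → ∀ t,
      KnuthEquiv ((a ++ [r,r+1,r] ++ b).set p t) ((a ++ [r+1,r,r] ++ b).set p t) := by
    intro p hp t
    rcases hp with h | h
    · rw [set_wlow a b r (r+1) r h t, set_wlow a b (r+1) r r h t]
      exact Relation.EqvGen.rel _ _ (KnuthStep.k1 _ b r r (r+1) (le_refl r) (by omega))
    · obtain ⟨δ, rfl⟩ : ∃ δ, p = a.length + 3 + δ := ⟨p - a.length - 3, by omega⟩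
      rw [set_whigh a b r (r+1) r δ t, set_whigh a b (r+1) r r δ t]
      exact Relation.EqvGen.rel _ _ (KnuthStep.k1 a _ r r (r+1) (le_refl r) (by omega))
  have hnotHv0 : ¬ UnpairedHigh r (a ++ [r+1,r,r] ++ b) a.length := by
    refine notHigh_le (show a.length < a.length + 2 by omega) (by omega) ?_
    rw [hv0, hv2]
  have hnotHu1 : ¬ UnpairedHigh r (a ++ [r,r+1,r] ++ b) (a.length + 1) := by
    refine notHigh_le (show a.length + 1 < a.length + 3 + 0 by omega) (by omega) ?_
    rw [hu1, hu3 0, ht_zero]; omega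
  have hnotLv1 : ¬ UnpairedLow r (a ++ [r+1,r,r] ++ b) (a.length + 1) := by
    refine notLow_ge (show a.length ≤ a.length + 1 by omega) ?_
    rw [hv0, show a.length + 1 + 1 = a.length + 2 from rfl, hv2]
  have hnotLu2 : ¬ UnpairedLow r (a ++ [r,r+1,r] ++ b) (a.length + 2) := by
    refine notLow_ge (show a.length + 1 ≤ a.length + 2 by omega) ?_
    rw [hu1, show a.length + 2 + 1 = a.length + 3 + 0 from rfl, hu3 0, ht_zero]; omega
  -- High part : pattern 1
  have hiffH : ∀ x < (a ++ [r,r+1,r] ++ b).length,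
      (UnpairedHigh r (a ++ [r,r+1,r] ++ b) x ↔ UnpairedHigh r (a ++ [r+1,r,r] ++ b) x) := by
    intro x hx
    rcases pos_cases a.length x with h | h | h | ⟨δ, h⟩
    · rcases Nat.lt_or_ge x a.length with h' | h'
      · exact (hoiff x (Or.inl h')).1
      · have hxm : x = a.length := by omega
        subst hxm
        exact iff_of_false (notHigh_letter (by rw [getD_w0]; omega)) hnotHv0
    · subst h
      exact iff_of_false hnotHu1 (notHigh_letter (by rw [getD_w1]; omega))
    · subst h
      exact iff_of_false (notHigh_letter (by rw [getD_w2]; omega))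
        (notHigh_letter (by rw [getD_w2]; omega))
    · subst h
      exact (hoiff _ (Or.inr (by omega))).1
  have hsetH : ∀ p, Fir (UnpairedHigh r (a ++ [r,r+1,r] ++ b)) (a ++ [r,r+1,r] ++ b).length p →
      KnuthEquiv ((a ++ [r,r+1,r] ++ b).set p r) ((a ++ [r+1,r,r] ++ b).set p r) := by
    intro p hp
    have hletter := hp.2.1.2.1
    rcases pos_cases a.length p with h | h | h | ⟨δ, h⟩
    · rcases Nat.lt_or_ge p a.length with h' | h'
      · exact hout p (Or.inl h') r
      · have hxm : p = a.length := by omega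
        subst hxm
        rw [getD_w0] at hletter; omega
    · subst h; exact absurd hp.2.1 hnotHu1
    · subst h; rw [getD_w2] at hletter; omega
    · subst h
      exact hout _ (Or.inr (by omega)) r
  -- Low part : pattern 2 with endpoints (m, m+2)
  have hiffL : ∀ x < (a ++ [r,r+1,r] ++ b).length, x ≠ a.length → x ≠ a.length + 2 →
      (UnpairedLow r (a ++ [r,r+1,r] ++ b) x ↔ UnpairedLow r (a ++ [r+1,r,r] ++ b) x) := by
    intro x hx hx0 hx2
    rcases pos_cases a.length x with h | h | h | ⟨δ, h⟩
    · exact (hoiff x (Or.inl (by omega))).2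
    · subst h
      exact iff_of_false (notLow_letter (by rw [getD_w1]; omega)) hnotLv1
    · exact absurd h hx2
    · subst h
      exact (hoiff _ (Or.inr (by omega))).2
  have hpq : UnpairedLow r (a ++ [r,r+1,r] ++ b) a.length ↔
      UnpairedLow r (a ++ [r+1,r,r] ++ b) (a.length + 2) := by
    refine endpoint_low (by omega) (by omega) (getD_w0 a b r (r+1) r) (getD_w2 a b (r+1) r r)
      (by rw [hu1, show a.length + 2 + 1 = a.length + 3 + 0 from rfl, hv3 0, ht_zero]; ring)
      (fun p hp => hht p (by omega)) ?_
    intro p hp1 hp2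
    have h23 : ht r (a ++ [r+1,r,r] ++ b) (a.length + 2 + 1) = ht r a a.length - 1 := by
      rw [show a.length + 2 + 1 = a.length + 3 + 0 from rfl, hv3 0, ht_zero]; ring
    rw [h23]
    rcases Nat.lt_or_ge p (a.length + 2) with hh | hh
    · have hpm : p = a.length + 1 := by omega
      subst hpm
      rw [hv1]; omega
    · have hpm : p = a.length + 2 := by omega
      subst hpm
      rw [hv2]; omega
  have hsetL : ∀ q, Las (UnpairedLow r (a ++ [r,r+1,r] ++ b)) (a ++ [r,r+1,r] ++ b).length q →
      KnuthEquiv ((a ++ [r,r+1,r] ++ b).set q (r+1))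
        ((a ++ [r+1,r,r] ++ b).set (if q = a.length then a.length + 2 else q) (r+1)) := by
    intro q hq
    have hletter := hq.2.1.2.1
    rcases pos_cases a.length q with h | h | h | ⟨δ, h⟩
    · rcases Nat.lt_or_ge q a.length with h' | h'
      · rw [if_neg (by omega)]
        exact hout q (Or.inl h') (r+1)
      · have hxm : q = a.length := by omega
        subst hxm
        rw [if_pos rfl, set_w0 a b r (r+1) r (r+1), set_w2 a b (r+1) r r (r+1)]
        exact Relation.EqvGen.symm _ _ (Relation.EqvGen.rel _ _
          (KnuthStep.k2 a b r (r+1) (r+1) (by omega) (le_refl _)))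
    · subst h; rw [getD_w1] at hletter; omega
    · subst h; exact absurd hq.2.1 hnotLu2
    · subst h
      rw [if_neg (by omega)]
      exact hout _ (Or.inr (by omega)) (r+1)
  have H := build_high1 hlen hiffH hsetH
  have L := build_low2 hlen hiffL hpq (by omega) (fun _ => hnotLu2) (fun _ =>
    notLow_letter (by rw [getD_w0]; omega))
    (fun x hx1 hx2 => by
      have hxm : x = a.length + 1 := by omega
      subst hxm
      exact ⟨notLow_letter (by rw [getD_w1]; omega), hnotLv1⟩) hsetL
  exact ⟨H.1, H.2, L.1, L.2⟩

lemma transfer_k1 (r : ℕ) (a b : List ℕ) (i j k : ℕ) (h1 : i ≤ j) (h2 : j < k) :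
    Transfer r (a ++ [i, k, j] ++ b) (a ++ [k, i, j] ++ b) := by
  rcases eq_or_ne i r with hir | hir
  · obtain rfl : r = i := hir.symm
    rcases eq_or_ne k (r+1) with hkr1 | hkr1
    · obtain rfl : r + 1 = k := hkr1.symm
      obtain rfl : r = j := by omega
      exact k1_hard r a b
    · exact k1_ir r a b j k h1 h2 (by omega) hkr1
  · rcases eq_or_ne i (r+1) with hir1 | hir1
    · obtain rfl : r + 1 = i := hir1.symm
      exact k1_ir1 r a b j k h1 h2
    · rcases eq_or_ne k r with hkr | hkr
      · obtain rfl : r = k := hkr.symm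
        exact k1_kr r a b i j h1 h2
      · rcases eq_or_ne k (r+1) with hkr1 | hkr1
        · obtain rfl : r + 1 = k := hkr1.symm
          exact k1_kr1 r a b i j h1 (by omega) hir
        · exact k1_none r a b i j k h1 h2 hir hir1 hkr hkr1

/-- k2-step with `i, k ∉ {r, r+1}`: heights agree everywhere. -/
lemma k2_none (r : ℕ) (a b : List ℕ) (i j k : ℕ) (h1 : i < j) (h2 : j ≤ k)
    (hi1 : i ≠ r) (hi2 : i ≠ r + 1) (hk1 : k ≠ r) (hk2 : k ≠ r + 1) :
    Transfer r (a ++ [j, i, k] ++ b) (a ++ [j, k, i] ++ b) := by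
  have hdli : dl r i = 0 := dl_other hi1 hi2
  have hdlk : dl r k = 0 := dl_other hk1 hk2
  have hlu : (a ++ [j,i,k] ++ b).length = a.length + 3 + b.length := wlen a b j i k
  have hlv : (a ++ [j,k,i] ++ b).length = a.length + 3 + b.length := wlen a b j k i
  have hlen : (a ++ [j,i,k] ++ b).length = (a ++ [j,k,i] ++ b).length := by omega
  have hht := hht_swap23 r a b j i k
  have hu2 : ht r (a ++ [j,i,k] ++ b) (a.length + 2) = ht r a a.length + dl r j := by
    rw [ht_w2, hdli]; ring
  have hv2 : ht r (a ++ [j,k,i] ++ b) (a.length + 2) = ht r a a.length + dl r j := by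
    rw [ht_w2, hdlk]; ring
  have he1 : ht r (a ++ [j,i,k] ++ b) (a.length+2) = ht r (a ++ [j,k,i] ++ b) (a.length+2) := by
    rw [hu2, hv2]
  have hoiff := outside_iff r a b j i k j k i (a.length+2) (a.length+2) hht he1 (le_refl _)
    (le_refl _) (by omega) (by omega) (by omega) (by omega)
  have hout : ∀ p, (p < a.length ∨ a.length + 3 ≤ p) → ∀ t,
      KnuthEquiv ((a ++ [j,i,k] ++ b).set p t) ((a ++ [j,k,i] ++ b).set p t) := by
    intro p hp t
    rcases hp with h | h
    · rw [set_wlow a b j i k h t, set_wlow a b j k i h t]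
      exact Relation.EqvGen.rel _ _ (KnuthStep.k2 _ b i j k h1 h2)
    · obtain ⟨δ, rfl⟩ : ∃ δ, p = a.length + 3 + δ := ⟨p - a.length - 3, by omega⟩
      rw [set_whigh a b j i k δ t, set_whigh a b j k i δ t]
      exact Relation.EqvGen.rel _ _ (KnuthStep.k2 a _ i j k h1 h2)
  have hiffH : ∀ x < (a ++ [j,i,k] ++ b).length,
      (UnpairedHigh r (a ++ [j,i,k] ++ b) x ↔ UnpairedHigh r (a ++ [j,k,i] ++ b) x) := by
    intro x hx
    rcases pos_cases a.length x with h | h | h | ⟨δ, h⟩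
    · rcases Nat.lt_or_ge x a.length with h' | h'
      · exact (hoiff x (Or.inl h')).1
      · have hxm : x = a.length := by omega
        subst hxm
        exact high_congr hlen hht he1 (le_refl _) (le_refl _) _ (by rw [getD_w0, getD_w0])
          (by omega) (fun h => by omega) (by omega)
    · subst h
      exact iff_of_false (notHigh_letter (by rw [getD_w1]; omega))
        (notHigh_letter (by rw [getD_w1]; omega))
    · subst h
      exact iff_of_false (notHigh_letter (by rw [getD_w2]; omega))
        (notHigh_letter (by rw [getD_w2]; omega))
    · subst h
      exact (hoiff _ (Or.inr (by omega))).1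
  have hiffL : ∀ x < (a ++ [j,i,k] ++ b).length,
      (UnpairedLow r (a ++ [j,i,k] ++ b) x ↔ UnpairedLow r (a ++ [j,k,i] ++ b) x) := by
    intro x hx
    rcases pos_cases a.length x with h | h | h | ⟨δ, h⟩
    · rcases Nat.lt_or_ge x a.length with h' | h'
      · exact (hoiff x (Or.inl h')).2
      · have hxm : x = a.length := by omega
        subst hxm
        exact low_congr hlen hht he1 (le_refl _) (le_refl _) _ (by rw [getD_w0, getD_w0])
          (by omega) (fun _ => by omega)
    · subst h
      exact iff_of_false (notLow_letter (by rw [getD_w1]; omega))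
        (notLow_letter (by rw [getD_w1]; omega))
    · subst h
      exact iff_of_false (notLow_letter (by rw [getD_w2]; omega))
        (notLow_letter (by rw [getD_w2]; omega))
    · subst h
      exact (hoiff _ (Or.inr (by omega))).2
  have hsetH : ∀ p, Fir (UnpairedHigh r (a ++ [j,i,k] ++ b)) (a ++ [j,i,k] ++ b).length p →
      KnuthEquiv ((a ++ [j,i,k] ++ b).set p r) ((a ++ [j,k,i] ++ b).set p r) := by
    intro p hp
    have hletter := hp.2.1.2.1
    rcases pos_cases a.length p with h | h | h | ⟨δ, h⟩
    · rcases Nat.lt_or_ge p a.length with h' | h'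
      · exact hout p (Or.inl h') r
      · have hxm : p = a.length := by omega
        subst hxm
        rw [getD_w0] at hletter
        rw [set_w0 a b j i k r, set_w0 a b j k i r]
        exact Relation.EqvGen.rel _ _ (KnuthStep.k2 a b i r k (by omega) (by omega))
    · subst h; rw [getD_w1] at hletter; omega
    · subst h; rw [getD_w2] at hletter; omega
    · subst h
      exact hout _ (Or.inr (by omega)) r
  have hsetL : ∀ q, Las (UnpairedLow r (a ++ [j,i,k] ++ b)) (a ++ [j,i,k] ++ b).length q →
      KnuthEquiv ((a ++ [j,i,k] ++ b).set q (r+1)) ((a ++ [j,k,i] ++ b).set q (r+1)) := by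
    intro q hq
    have hletter := hq.2.1.2.1
    rcases pos_cases a.length q with h | h | h | ⟨δ, h⟩
    · rcases Nat.lt_or_ge q a.length with h' | h'
      · exact hout q (Or.inl h') (r+1)
      · have hxm : q = a.length := by omega
        subst hxm
        rw [getD_w0] at hletter
        rw [set_w0 a b j i k (r+1), set_w0 a b j k i (r+1)]
        exact Relation.EqvGen.rel _ _ (KnuthStep.k2 a b i (r+1) k (by omega) (by omega))
    · subst h; rw [getD_w1] at hletter; omega
    · subst h; rw [getD_w2] at hletter; omega
    · subst h
      exact hout _ (Or.inr (by omega)) (r+1)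
  have H := build_high1 hlen hiffH hsetH
  have L := build_low1 hlen hiffL hsetL
  exact ⟨H.1, H.2, L.1, L.2⟩

/-- k2-step with `i = r`, `k ≠ r+1`: the unpaired-low candidate moves from slot 1 to slot 2. -/
lemma k2_ir (r : ℕ) (a b : List ℕ) (j k : ℕ) (h1 : r < j) (h2 : j ≤ k) (hk2 : k ≠ r + 1) :
    Transfer r (a ++ [j, r, k] ++ b) (a ++ [j, k, r] ++ b) := by
  have hdlk : dl r k = 0 := dl_other (by omega) hk2
  have hlu : (a ++ [j,r,k] ++ b).length = a.length + 3 + b.length := wlen a b j r k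
  have hlv : (a ++ [j,k,r] ++ b).length = a.length + 3 + b.length := wlen a b j k r
  have hlen : (a ++ [j,r,k] ++ b).length = (a ++ [j,k,r] ++ b).length := by omega
  have hht := hht_swap23 r a b j r k
  have hu0 : ht r (a ++ [j,r,k] ++ b) a.length = ht r a a.length := ht_w0 r a b j r k
  have hu1 : ht r (a ++ [j,r,k] ++ b) (a.length + 1) = ht r a a.length + dl r j :=
    ht_w1 r a b j r k
  have hu2 : ht r (a ++ [j,r,k] ++ b) (a.length + 2) = ht r a a.length + dl r j - 1 := by
    rw [ht_w2, dl_r]; ring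
  have hv2 : ht r (a ++ [j,k,r] ++ b) (a.length + 2) = ht r a a.length + dl r j := by
    rw [ht_w2, hdlk]; ring
  have hu3 : ∀ δ, ht r (a ++ [j,r,k] ++ b) (a.length + 3 + δ) =
      ht r a a.length + dl r j - 1 + ht r b δ := by
    intro δ; rw [ht_w3, dl_r, hdlk]; ring
  have he1 : ht r (a ++ [j,r,k] ++ b) (a.length+3) = ht r (a ++ [j,k,r] ++ b) (a.length+3) :=
    hht _ (by omega)
  have he2 : ht r (a ++ [j,r,k] ++ b) (a.length+3) ≤
      ht r (a ++ [j,r,k] ++ b) (a.length+2) := by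
    rw [show a.length + 3 = a.length + 3 + 0 from rfl, hu3 0, ht_zero, hu2]; omega
  have he3 : ht r (a ++ [j,k,r] ++ b) (a.length+3) ≤
      ht r (a ++ [j,k,r] ++ b) (a.length+2) := by
    rw [← he1, show a.length + 3 = a.length + 3 + 0 from rfl, hu3 0, ht_zero, hv2]; omega
  have hoiff := outside_iff r a b j r k j k r (a.length+2) (a.length+3) hht he1 he2 he3
    (by omega) (by omega) (by omega) (by omega)
  have hout : ∀ p, (p < a.length ∨ a.length + 3 ≤ p) → ∀ t,
      KnuthEquiv ((a ++ [j,r,k] ++ b).set p t) ((a ++ [j,k,r] ++ b).set p t) := by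
    intro p hp t
    rcases hp with h | h
    · rw [set_wlow a b j r k h t, set_wlow a b j k r h t]
      exact Relation.EqvGen.rel _ _ (KnuthStep.k2 _ b r j k h1 h2)
    · obtain ⟨δ, rfl⟩ : ∃ δ, p = a.length + 3 + δ := ⟨p - a.length - 3, by omega⟩
      rw [set_whigh a b j r k δ t, set_whigh a b j k r δ t]
      exact Relation.EqvGen.rel _ _ (KnuthStep.k2 a _ r j k h1 h2)
  -- High part : pattern 1
  have hiffH : ∀ x < (a ++ [j,r,k] ++ b).length,
      (UnpairedHigh r (a ++ [j,r,k] ++ b) x ↔ UnpairedHigh r (a ++ [j,k,r] ++ b) x) := by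
    intro x hx
    rcases pos_cases a.length x with h | h | h | ⟨δ, h⟩
    · rcases Nat.lt_or_ge x a.length with h' | h'
      · exact (hoiff x (Or.inl h')).1
      · have hxm : x = a.length := by omega
        subst hxm
        exact high_congr hlen hht he1 he2 he3 _ (by rw [getD_w0, getD_w0]) (by omega)
          (fun h => by omega) (by omega)
    · subst h
      exact iff_of_false (notHigh_letter (by rw [getD_w1]; omega))
        (notHigh_letter (by rw [getD_w1]; omega))
    · subst h
      exact iff_of_false (notHigh_letter (by rw [getD_w2]; omega))
        (notHigh_letter (by rw [getD_w2]; omega))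
    · subst h
      exact (hoiff _ (Or.inr (by omega))).1
  have hsetH : ∀ p, Fir (UnpairedHigh r (a ++ [j,r,k] ++ b)) (a ++ [j,r,k] ++ b).length p →
      KnuthEquiv ((a ++ [j,r,k] ++ b).set p r) ((a ++ [j,k,r] ++ b).set p r) := by
    intro p hp
    have hletter := hp.2.1.2.1
    rcases pos_cases a.length p with h | h | h | ⟨δ, h⟩
    · rcases Nat.lt_or_ge p a.length with h' | h'
      · exact hout p (Or.inl h') r
      · have hxm : p = a.length := by omega
        subst hxm
        rw [getD_w0] at hletter
        exfalso
        refine notHigh_le (show a.length < a.length + 2 by omega) (by omega) ?_ hp.2.1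
        rw [hu0, hu2, hletter, dl_r1]; omega
    · subst h; rw [getD_w1] at hletter; omega
    · subst h; rw [getD_w2] at hletter; omega
    · subst h
      exact hout _ (Or.inr (by omega)) r
  -- Low part : pattern 2 with endpoints (m+1, m+2)
  have hiffL : ∀ x < (a ++ [j,r,k] ++ b).length, x ≠ a.length + 1 → x ≠ a.length + 2 →
      (UnpairedLow r (a ++ [j,r,k] ++ b) x ↔ UnpairedLow r (a ++ [j,k,r] ++ b) x) := by
    intro x hx hx1 hx2
    rcases pos_cases a.length x with h | h | h | ⟨δ, h⟩
    · rcases Nat.lt_or_ge x a.length with h' | h'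
      · exact (hoiff x (Or.inl h')).2
      · have hxm : x = a.length := by omega
        subst hxm
        exact iff_of_false (notLow_letter (by rw [getD_w0]; omega))
          (notLow_letter (by rw [getD_w0]; omega))
    · exact absurd h hx1
    · exact absurd h hx2
    · subst h
      exact (hoiff _ (Or.inr (by omega))).2
  have hpq : UnpairedLow r (a ++ [j,r,k] ++ b) (a.length + 1) ↔
      UnpairedLow r (a ++ [j,k,r] ++ b) (a.length + 2) := by
    refine endpoint_low (by omega) (by omega) (getD_w1 a b j r k) (getD_w2 a b j k r)
      (by rw [show a.length + 1 + 1 = a.length + 2 from rfl, hu2,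
        show a.length + 2 + 1 = a.length + 3 + 0 from rfl, ← hht _ (by omega), hu3 0,
        ht_zero]; ring) (fun p hp => hht p (by omega)) ?_
    intro p hp1 hp2
    have hpm : p = a.length + 2 := by omega
    subst hpm
    rw [show a.length + 2 + 1 = a.length + 3 + 0 from rfl, ← hht _ (by omega), hu3 0,
      ht_zero, hv2]
    omega
  have hP1 : ¬ UnpairedLow r (a ++ [j,r,k] ++ b) (a.length + 2) :=
    notLow_letter (by rw [getD_w2]; omega)
  have hQ0 : ¬ UnpairedLow r (a ++ [j,k,r] ++ b) (a.length + 1) :=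
    notLow_letter (by rw [getD_w1]; omega)
  have hsetL : ∀ q, Las (UnpairedLow r (a ++ [j,r,k] ++ b)) (a ++ [j,r,k] ++ b).length q →
      KnuthEquiv ((a ++ [j,r,k] ++ b).set q (r+1))
        ((a ++ [j,k,r] ++ b).set (if q = a.length + 1 then a.length + 2 else q) (r+1)) := by
    intro q hq
    have hletter := hq.2.1.2.1
    rcases pos_cases a.length q with h | h | h | ⟨δ, h⟩
    · rcases Nat.lt_or_ge q a.length with h' | h'
      · rw [if_neg (by omega)]
        exact hout q (Or.inl h') (r+1)
      · have hxm : q = a.length := by omega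
        subst hxm
        rw [getD_w0] at hletter; omega
    · subst h
      -- need j ≥ r+2 : if j = r+1 then slot 1 is never unpaired-low
      have hj : r + 2 ≤ j := by
        rcases Nat.lt_or_ge j (r+2) with hj' | hj'
        · exfalso
          have hjr : j = r + 1 := by omega
          refine notLow_ge (show a.length ≤ a.length + 1 by omega) ?_ hq.2.1
          rw [hu0, show a.length + 1 + 1 = a.length + 2 from rfl, hu2, hjr, dl_r1]
          omega
        · exact hj'
      rw [if_pos rfl, set_w1 a b j r k (r+1), set_w2 a b j k r (r+1)]
      exact Relation.EqvGen.rel _ _ (KnuthStep.k2 a b (r+1) j k (by omega) h2)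
    · subst h; rw [getD_w2] at hletter; omega
    · subst h
      rw [if_neg (by omega)]
      exact hout _ (Or.inr (by omega)) (r+1)
  have H := build_high1 hlen hiffH hsetH
  have L := build_low2 hlen hiffL hpq (by omega) (fun _ => hP1) (fun _ => hQ0)
    (fun x hx1 hx2 => by exfalso; omega) hsetL
  exact ⟨H.1, H.2, L.1, L.2⟩

/-- k2-step with `i = r+1` (hence `j, k ≥ r+2`): the unpaired-high candidate moves
from slot 1 to slot 2. -/
lemma k2_ir1 (r : ℕ) (a b : List ℕ) (j k : ℕ) (h1 : r + 1 < j) (h2 : j ≤ k) :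
    Transfer r (a ++ [j, r+1, k] ++ b) (a ++ [j, k, r+1] ++ b) := by
  have hdlj : dl r j = 0 := dl_other (by omega) (by omega)
  have hdlk : dl r k = 0 := dl_other (by omega) (by omega)
  have hlu : (a ++ [j,r+1,k] ++ b).length = a.length + 3 + b.length := wlen a b j (r+1) k
  have hlv : (a ++ [j,k,r+1] ++ b).length = a.length + 3 + b.length := wlen a b j k (r+1)
  have hlen : (a ++ [j,r+1,k] ++ b).length = (a ++ [j,k,r+1] ++ b).length := by omega
  have hht := hht_swap23 r a b j (r+1) k
  have hu1 : ht r (a ++ [j,r+1,k] ++ b) (a.length + 1) = ht r a a.length := by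
    rw [ht_w1, hdlj]; ring
  have hu2 : ht r (a ++ [j,r+1,k] ++ b) (a.length + 2) = ht r a a.length + 1 := by
    rw [ht_w2, hdlj, dl_r1]; ring
  have hv2 : ht r (a ++ [j,k,r+1] ++ b) (a.length + 2) = ht r a a.length := by
    rw [ht_w2, hdlj, hdlk]; ring
  have he1 : ht r (a ++ [j,r+1,k] ++ b) (a.length+1) = ht r (a ++ [j,k,r+1] ++ b)
      (a.length+1) := hht _ (by omega)
  have he2 : ht r (a ++ [j,r+1,k] ++ b) (a.length+1) ≤
      ht r (a ++ [j,r+1,k] ++ b) (a.length+2) := by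
    rw [hu1, hu2]; omega
  have he3 : ht r (a ++ [j,k,r+1] ++ b) (a.length+1) ≤
      ht r (a ++ [j,k,r+1] ++ b) (a.length+2) := by
    rw [← he1, hu1, hv2]
  have hoiff := outside_iff r a b j (r+1) k j k (r+1) (a.length+2) (a.length+1) hht he1 he2 he3
    (by omega) (by omega) (by omega) (by omega)
  have hout : ∀ p, (p < a.length ∨ a.length + 3 ≤ p) → ∀ t,
      KnuthEquiv ((a ++ [j,r+1,k] ++ b).set p t) ((a ++ [j,k,r+1] ++ b).set p t) := by
    intro p hp t
    rcases hp with h | h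
    · rw [set_wlow a b j (r+1) k h t, set_wlow a b j k (r+1) h t]
      exact Relation.EqvGen.rel _ _ (KnuthStep.k2 _ b (r+1) j k h1 h2)
    · obtain ⟨δ, rfl⟩ : ∃ δ, p = a.length + 3 + δ := ⟨p - a.length - 3, by omega⟩
      rw [set_whigh a b j (r+1) k δ t, set_whigh a b j k (r+1) δ t]
      exact Relation.EqvGen.rel _ _ (KnuthStep.k2 a _ (r+1) j k h1 h2)
  -- High part : pattern 2 with endpoints (m+1, m+2)
  have hiffH : ∀ x < (a ++ [j,r+1,k] ++ b).length, x ≠ a.length + 1 → x ≠ a.length + 2 →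
      (UnpairedHigh r (a ++ [j,r+1,k] ++ b) x ↔ UnpairedHigh r (a ++ [j,k,r+1] ++ b) x) := by
    intro x hx hx1 hx2
    rcases pos_cases a.length x with h | h | h | ⟨δ, h⟩
    · rcases Nat.lt_or_ge x a.length with h' | h'
      · exact (hoiff x (Or.inl h')).1
      · have hxm : x = a.length := by omega
        subst hxm
        exact iff_of_false (notHigh_letter (by rw [getD_w0]; omega))
          (notHigh_letter (by rw [getD_w0]; omega))
    · exact absurd h hx1
    · exact absurd h hx2
    · subst h
      exact (hoiff _ (Or.inr (by omega))).1
  have hpq : UnpairedHigh r (a ++ [j,r+1,k] ++ b) (a.length + 1) ↔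
      UnpairedHigh r (a ++ [j,k,r+1] ++ b) (a.length + 2) := by
    refine endpoint_high (by omega) hlen (by omega) (getD_w1 a b j (r+1) k)
      (getD_w2 a b j k (r+1)) (by rw [hu1, hv2]) (fun q hq => hht q (by omega)) ?_
    intro q hq1 hq2
    have hqm : q = a.length + 2 := by omega
    subst hqm
    rw [hu1, hu2]; omega
  have hP1 : ¬ UnpairedHigh r (a ++ [j,r+1,k] ++ b) (a.length + 2) :=
    notHigh_letter (by rw [getD_w2]; omega)
  have hQ0 : ¬ UnpairedHigh r (a ++ [j,k,r+1] ++ b) (a.length + 1) :=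
    notHigh_letter (by rw [getD_w1]; omega)
  have hsetH : ∀ p, Fir (UnpairedHigh r (a ++ [j,r+1,k] ++ b))
      (a ++ [j,r+1,k] ++ b).length p →
      KnuthEquiv ((a ++ [j,r+1,k] ++ b).set p r)
        ((a ++ [j,k,r+1] ++ b).set (if p = a.length + 1 then a.length + 2 else p) r) := by
    intro p hp
    have hletter := hp.2.1.2.1
    rcases pos_cases a.length p with h | h | h | ⟨δ, h⟩
    · rcases Nat.lt_or_ge p a.length with h' | h'
      · rw [if_neg (by omega)]
        exact hout p (Or.inl h') r
      · have hxm : p = a.length := by omega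
        subst hxm
        rw [getD_w0] at hletter; omega
    · subst h
      rw [if_pos rfl, set_w1 a b j (r+1) k r, set_w2 a b j k (r+1) r]
      exact Relation.EqvGen.rel _ _ (KnuthStep.k2 a b r j k (by omega) h2)
    · subst h; rw [getD_w2] at hletter; omega
    · subst h
      rw [if_neg (by omega)]
      exact hout _ (Or.inr (by omega)) r
  -- Low part : pattern 1
  have hiffL : ∀ x < (a ++ [j,r+1,k] ++ b).length,
      (UnpairedLow r (a ++ [j,r+1,k] ++ b) x ↔ UnpairedLow r (a ++ [j,k,r+1] ++ b) x) := by
    intro x hx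
    rcases pos_cases a.length x with h | h | h | ⟨δ, h⟩
    · rcases Nat.lt_or_ge x a.length with h' | h'
      · exact (hoiff x (Or.inl h')).2
      · have hxm : x = a.length := by omega
        subst hxm
        exact iff_of_false (notLow_letter (by rw [getD_w0]; omega))
          (notLow_letter (by rw [getD_w0]; omega))
    · subst h
      exact iff_of_false (notLow_letter (by rw [getD_w1]; omega))
        (notLow_letter (by rw [getD_w1]; omega))
    · subst h
      exact iff_of_false (notLow_letter (by rw [getD_w2]; omega))
        (notLow_letter (by rw [getD_w2]; omega))
    · subst h
      exact (hoiff _ (Or.inr (by omega))).2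
  have hsetL : ∀ q, Las (UnpairedLow r (a ++ [j,r+1,k] ++ b)) (a ++ [j,r+1,k] ++ b).length q →
      KnuthEquiv ((a ++ [j,r+1,k] ++ b).set q (r+1)) ((a ++ [j,k,r+1] ++ b).set q (r+1)) := by
    intro q hq
    have hletter := hq.2.1.2.1
    rcases pos_cases a.length q with h | h | h | ⟨δ, h⟩
    · rcases Nat.lt_or_ge q a.length with h' | h'
      · exact hout q (Or.inl h') (r+1)
      · have hxm : q = a.length := by omega
        subst hxm
        rw [getD_w0] at hletter; omega
    · subst h; rw [getD_w1] at hletter; omega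
    · subst h; rw [getD_w2] at hletter; omega
    · subst h
      exact hout _ (Or.inr (by omega)) (r+1)
  have H := build_high2 hlen hiffH hpq (by omega) (fun _ => hP1) (fun _ => hQ0)
    (fun x hx1 hx2 => by exfalso; omega) hsetH
  have L := build_low1 hlen hiffL hsetL
  exact ⟨H.1, H.2, L.1, L.2⟩

/-- k2-step with `k = r` (hence `i < j ≤ r`): the unpaired-low candidate moves
from slot 2 to slot 1. -/
lemma k2_kr (r : ℕ) (a b : List ℕ) (i j : ℕ) (h1 : i < j) (h2 : j ≤ r) :
    Transfer r (a ++ [j, i, r] ++ b) (a ++ [j, r, i] ++ b) := by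
  have hdli : dl r i = 0 := dl_other (by omega) (by omega)
  have hlu : (a ++ [j,i,r] ++ b).length = a.length + 3 + b.length := wlen a b j i r
  have hlv : (a ++ [j,r,i] ++ b).length = a.length + 3 + b.length := wlen a b j r i
  have hlen : (a ++ [j,i,r] ++ b).length = (a ++ [j,r,i] ++ b).length := by omega
  have hht := hht_swap23 r a b j i r
  have hu1 : ht r (a ++ [j,i,r] ++ b) (a.length + 1) = ht r a a.length + dl r j :=
    ht_w1 r a b j i r
  have hu2 : ht r (a ++ [j,i,r] ++ b) (a.length + 2) = ht r a a.length + dl r j := by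
    rw [ht_w2, hdli]; ring
  have hv2 : ht r (a ++ [j,r,i] ++ b) (a.length + 2) = ht r a a.length + dl r j - 1 := by
    rw [ht_w2, dl_r]; ring
  have hu3 : ∀ δ, ht r (a ++ [j,i,r] ++ b) (a.length + 3 + δ) =
      ht r a a.length + dl r j - 1 + ht r b δ := by
    intro δ; rw [ht_w3, dl_r, hdli]; ring
  have he1 : ht r (a ++ [j,i,r] ++ b) (a.length+3) = ht r (a ++ [j,r,i] ++ b) (a.length+3) :=
    hht _ (by omega)
  have he2 : ht r (a ++ [j,i,r] ++ b) (a.length+3) ≤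
      ht r (a ++ [j,i,r] ++ b) (a.length+2) := by
    rw [show a.length + 3 = a.length + 3 + 0 from rfl, hu3 0, ht_zero, hu2]; omega
  have he3 : ht r (a ++ [j,r,i] ++ b) (a.length+3) ≤
      ht r (a ++ [j,r,i] ++ b) (a.length+2) := by
    rw [← he1, show a.length + 3 = a.length + 3 + 0 from rfl, hu3 0, ht_zero, hv2]; omega
  have hoiff := outside_iff r a b j i r j r i (a.length+2) (a.length+3) hht he1 he2 he3
    (by omega) (by omega) (by omega) (by omega)
  have hout : ∀ p, (p < a.length ∨ a.length + 3 ≤ p) → ∀ t,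
      KnuthEquiv ((a ++ [j,i,r] ++ b).set p t) ((a ++ [j,r,i] ++ b).set p t) := by
    intro p hp t
    rcases hp with h | h
    · rw [set_wlow a b j i r h t, set_wlow a b j r i h t]
      exact Relation.EqvGen.rel _ _ (KnuthStep.k2 _ b i j r h1 h2)
    · obtain ⟨δ, rfl⟩ : ∃ δ, p = a.length + 3 + δ := ⟨p - a.length - 3, by omega⟩
      rw [set_whigh a b j i r δ t, set_whigh a b j r i δ t]
      exact Relation.EqvGen.rel _ _ (KnuthStep.k2 a _ i j r h1 h2)
  -- High part : pattern 1 (no window position can be unpaired-high)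
  have hiffH : ∀ x < (a ++ [j,i,r] ++ b).length,
      (UnpairedHigh r (a ++ [j,i,r] ++ b) x ↔ UnpairedHigh r (a ++ [j,r,i] ++ b) x) := by
    intro x hx
    rcases pos_cases a.length x with h | h | h | ⟨δ, h⟩
    · rcases Nat.lt_or_ge x a.length with h' | h'
      · exact (hoiff x (Or.inl h')).1
      · have hxm : x = a.length := by omega
        subst hxm
        exact iff_of_false (notHigh_letter (by rw [getD_w0]; omega))
          (notHigh_letter (by rw [getD_w0]; omega))
    · subst h
      exact iff_of_false (notHigh_letter (by rw [getD_w1]; omega))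
        (notHigh_letter (by rw [getD_w1]; omega))
    · subst h
      exact iff_of_false (notHigh_letter (by rw [getD_w2]; omega))
        (notHigh_letter (by rw [getD_w2]; omega))
    · subst h
      exact (hoiff _ (Or.inr (by omega))).1
  have hsetH : ∀ p, Fir (UnpairedHigh r (a ++ [j,i,r] ++ b)) (a ++ [j,i,r] ++ b).length p →
      KnuthEquiv ((a ++ [j,i,r] ++ b).set p r) ((a ++ [j,r,i] ++ b).set p r) := by
    intro p hp
    have hletter := hp.2.1.2.1
    rcases pos_cases a.length p with h | h | h | ⟨δ, h⟩
    · rcases Nat.lt_or_ge p a.length with h' | h'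
      · exact hout p (Or.inl h') r
      · have hxm : p = a.length := by omega
        subst hxm
        rw [getD_w0] at hletter; omega
    · subst h; rw [getD_w1] at hletter; omega
    · subst h; rw [getD_w2] at hletter; omega
    · subst h
      exact hout _ (Or.inr (by omega)) r
  -- Low part : pattern 2 with endpoints (m+2, m+1)
  have hiffL : ∀ x < (a ++ [j,i,r] ++ b).length, x ≠ a.length + 2 → x ≠ a.length + 1 →
      (UnpairedLow r (a ++ [j,i,r] ++ b) x ↔ UnpairedLow r (a ++ [j,r,i] ++ b) x) := by
    intro x hx hx2 hx1
    rcases pos_cases a.length x with h | h | h | ⟨δ, h⟩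
    · rcases Nat.lt_or_ge x a.length with h' | h'
      · exact (hoiff x (Or.inl h')).2
      · have hxm : x = a.length := by omega
        subst hxm
        exact low_congr hlen hht he1 he2 he3 _ (by rw [getD_w0, getD_w0]) (by omega)
          (fun hcon => by omega)
    · exact absurd h hx1
    · exact absurd h hx2
    · subst h
      exact (hoiff _ (Or.inr (by omega))).2
  have hpq : UnpairedLow r (a ++ [j,i,r] ++ b) (a.length + 2) ↔
      UnpairedLow r (a ++ [j,r,i] ++ b) (a.length + 1) := by
    refine (endpoint_low (u := a ++ [j,r,i] ++ b) (v := a ++ [j,i,r] ++ b) (by omega)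
      (by omega) (getD_w1 a b j r i) (getD_w2 a b j i r)
      (by rw [show a.length + 1 + 1 = a.length + 2 from rfl, hv2,
        show a.length + 2 + 1 = a.length + 3 + 0 from rfl, hu3 0, ht_zero]; ring)
      (fun p hp => (hht p (by omega)).symm) ?_).symm
    intro p hp1 hp2
    have hpm : p = a.length + 2 := by omega
    subst hpm
    rw [show a.length + 2 + 1 = a.length + 3 + 0 from rfl, hu3 0, ht_zero, hu2]
    omega
  have hP1 : ¬ UnpairedLow r (a ++ [j,i,r] ++ b) (a.length + 1) :=
    notLow_letter (by rw [getD_w1]; omega)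
  have hQ0 : ¬ UnpairedLow r (a ++ [j,r,i] ++ b) (a.length + 2) :=
    notLow_letter (by rw [getD_w2]; omega)
  have hsetL : ∀ q, Las (UnpairedLow r (a ++ [j,i,r] ++ b)) (a ++ [j,i,r] ++ b).length q →
      KnuthEquiv ((a ++ [j,i,r] ++ b).set q (r+1))
        ((a ++ [j,r,i] ++ b).set (if q = a.length + 2 then a.length + 1 else q) (r+1)) := by
    intro q hq
    have hletter := hq.2.1.2.1
    rcases pos_cases a.length q with h | h | h | ⟨δ, h⟩
    · rcases Nat.lt_or_ge q a.length with h' | h'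
      · rw [if_neg (by omega)]
        exact hout q (Or.inl h') (r+1)
      · have hxm : q = a.length := by omega
        subst hxm
        rw [getD_w0] at hletter
        -- j = r : then slot 2 would also be unpaired-low, contradicting maximality
        exfalso
        have hlow2 : UnpairedLow r (a ++ [j,i,r] ++ b) (a.length + 2) := by
          refine ⟨by omega, getD_w2 a b j i r, fun p hp => ?_⟩
          have h3 : ht r (a ++ [j,i,r] ++ b) (a.length + 2 + 1) =
              ht r a a.length - 2 := by
            rw [show a.length + 2 + 1 = a.length + 3 + 0 from rfl, hu3 0, ht_zero,
              hletter, dl_r]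
            ring
          rw [h3]
          have hdlj : dl r j = -1 := by rw [hletter]; exact dl_r r
          rcases pos_cases a.length p with hh | hh | hh | ⟨δ, hh⟩
          · have := hq.2.1.2.2 p hh
            rw [hu1, hdlj] at this
            omega
          · subst hh; rw [hu1, hdlj]; omega
          · subst hh; rw [hu2, hdlj]; omega
          · omega
        exact hq.2.2 (a.length + 2) (by omega) (by omega) hlow2
    · subst h; rw [getD_w1] at hletter; omega
    · subst h
      rw [if_pos rfl, set_w2 a b j i r (r+1), set_w1 a b j r i (r+1)]
      exact Relation.EqvGen.rel _ _ (KnuthStep.k2 a b i j (r+1) h1 (by omega))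
    · subst h
      rw [if_neg (by omega)]
      exact hout _ (Or.inr (by omega)) (r+1)
  have H := build_high1 hlen hiffH hsetH
  have L := build_low2 hlen hiffL hpq (by omega) (fun _ => hP1) (fun _ => hQ0)
    (fun x hx1 hx2 => by exfalso; omega) hsetL
  exact ⟨H.1, H.2, L.1, L.2⟩

/-- k2-step with `k = r+1`, `i ∉ {r, r+1}` (hence `i < r`): the unpaired-high candidate
moves from slot 2 to slot 1. -/
lemma k2_kr1 (r : ℕ) (a b : List ℕ) (i j : ℕ) (h1 : i < j) (h2 : j ≤ r + 1)
    (hi1 : i ≠ r) :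
    Transfer r (a ++ [j, i, r+1] ++ b) (a ++ [j, r+1, i] ++ b) := by
  have hdli : dl r i = 0 := dl_other hi1 (by omega)
  have hlu : (a ++ [j,i,r+1] ++ b).length = a.length + 3 + b.length := wlen a b j i (r+1)
  have hlv : (a ++ [j,r+1,i] ++ b).length = a.length + 3 + b.length := wlen a b j (r+1) i
  have hlen : (a ++ [j,i,r+1] ++ b).length = (a ++ [j,r+1,i] ++ b).length := by omega
  have hht := hht_swap23 r a b j i (r+1)
  have hu0 : ht r (a ++ [j,i,r+1] ++ b) a.length = ht r a a.length := ht_w0 r a b j i (r+1)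
  have hu1 : ht r (a ++ [j,i,r+1] ++ b) (a.length + 1) = ht r a a.length + dl r j :=
    ht_w1 r a b j i (r+1)
  have hv1 : ht r (a ++ [j,r+1,i] ++ b) (a.length + 1) = ht r a a.length + dl r j :=
    ht_w1 r a b j (r+1) i
  have hu2 : ht r (a ++ [j,i,r+1] ++ b) (a.length + 2) = ht r a a.length + dl r j := by
    rw [ht_w2, hdli]; ring
  have hv2 : ht r (a ++ [j,r+1,i] ++ b) (a.length + 2) = ht r a a.length + dl r j + 1 := by
    rw [ht_w2, dl_r1]
  have hu3 : ∀ δ, ht r (a ++ [j,i,r+1] ++ b) (a.length + 3 + δ) =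
      ht r a a.length + dl r j + 1 + ht r b δ := by
    intro δ; rw [ht_w3, dl_r1, hdli]; ring
  have he1 : ht r (a ++ [j,i,r+1] ++ b) (a.length+1) = ht r (a ++ [j,r+1,i] ++ b)
      (a.length+1) := hht _ (by omega)
  have he2 : ht r (a ++ [j,i,r+1] ++ b) (a.length+1) ≤
      ht r (a ++ [j,i,r+1] ++ b) (a.length+2) := by
    rw [hu1, hu2]
  have he3 : ht r (a ++ [j,r+1,i] ++ b) (a.length+1) ≤
      ht r (a ++ [j,r+1,i] ++ b) (a.length+2) := by
    rw [hv1, hv2]; omega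
  have hoiff := outside_iff r a b j i (r+1) j (r+1) i (a.length+2) (a.length+1) hht he1 he2 he3
    (by omega) (by omega) (by omega) (by omega)
  have hout : ∀ p, (p < a.length ∨ a.length + 3 ≤ p) → ∀ t,
      KnuthEquiv ((a ++ [j,i,r+1] ++ b).set p t) ((a ++ [j,r+1,i] ++ b).set p t) := by
    intro p hp t
    rcases hp with h | h
    · rw [set_wlow a b j i (r+1) h t, set_wlow a b j (r+1) i h t]
      exact Relation.EqvGen.rel _ _ (KnuthStep.k2 _ b i j (r+1) h1 h2)
    · obtain ⟨δ, rfl⟩ : ∃ δ, p = a.length + 3 + δ := ⟨p - a.length - 3, by omega⟩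
      rw [set_whigh a b j i (r+1) δ t, set_whigh a b j (r+1) i δ t]
      exact Relation.EqvGen.rel _ _ (KnuthStep.k2 a _ i j (r+1) h1 h2)
  -- High part : pattern 2 with endpoints (m+2, m+1)
  have hiffH : ∀ x < (a ++ [j,i,r+1] ++ b).length, x ≠ a.length + 2 → x ≠ a.length + 1 →
      (UnpairedHigh r (a ++ [j,i,r+1] ++ b) x ↔ UnpairedHigh r (a ++ [j,r+1,i] ++ b) x) := by
    intro x hx hx2 hx1
    rcases pos_cases a.length x with h | h | h | ⟨δ, h⟩
    · rcases Nat.lt_or_ge x a.length with h' | h'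
      · exact (hoiff x (Or.inl h')).1
      · have hxm : x = a.length := by omega
        subst hxm
        exact high_congr hlen hht he1 he2 he3 _ (by rw [getD_w0, getD_w0]) (by omega)
          (fun hcon => by omega) (by omega)
    · exact absurd h hx1
    · exact absurd h hx2
    · subst h
      exact (hoiff _ (Or.inr (by omega))).1
  have hpq : UnpairedHigh r (a ++ [j,i,r+1] ++ b) (a.length + 2) ↔
      UnpairedHigh r (a ++ [j,r+1,i] ++ b) (a.length + 1) := by
    refine (endpoint_high (u := a ++ [j,r+1,i] ++ b) (v := a ++ [j,i,r+1] ++ b) (by omega)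
      hlen.symm (by omega) (getD_w1 a b j (r+1) i) (getD_w2 a b j i (r+1))
      (by rw [hv1, hu2]) (fun q hq => (hht q (by omega)).symm) ?_).symm
    intro q hq1 hq2
    have hqm : q = a.length + 2 := by omega
    subst hqm
    rw [hv1, hv2]; omega
  have hP1 : ¬ UnpairedHigh r (a ++ [j,i,r+1] ++ b) (a.length + 1) :=
    notHigh_letter (by rw [getD_w1]; omega)
  have hQ0 : ¬ UnpairedHigh r (a ++ [j,r+1,i] ++ b) (a.length + 2) :=
    notHigh_letter (by rw [getD_w2]; omega)
  have hsetH : ∀ p, Fir (UnpairedHigh r (a ++ [j,i,r+1] ++ b))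
      (a ++ [j,i,r+1] ++ b).length p →
      KnuthEquiv ((a ++ [j,i,r+1] ++ b).set p r)
        ((a ++ [j,r+1,i] ++ b).set (if p = a.length + 2 then a.length + 1 else p) r) := by
    intro p hp
    have hletter := hp.2.1.2.1
    rcases pos_cases a.length p with h | h | h | ⟨δ, h⟩
    · rcases Nat.lt_or_ge p a.length with h' | h'
      · rw [if_neg (by omega)]
        exact hout p (Or.inl h') r
      · have hxm : p = a.length := by omega
        subst hxm
        rw [getD_w0] at hletter
        rw [if_neg (by omega), set_w0 a b j i (r+1) r, set_w0 a b j (r+1) i r]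
        exact Relation.EqvGen.rel _ _ (KnuthStep.k2 a b i r (r+1) (by omega) (by omega))
    · subst h; rw [getD_w1] at hletter; omega
    · subst h
      -- need j ≤ r : if j = r+1 then slot 0 would also be unpaired-high
      have hj : j ≤ r := by
        rcases Nat.lt_or_ge r j with hj' | hj'
        · exfalso
          have hjr : j = r + 1 := by omega
          have hhighm : UnpairedHigh r (a ++ [j,i,r+1] ++ b) a.length := by
            refine ⟨by omega, by rw [getD_w0]; exact hjr, fun q hq hmq => ?_⟩
            rw [hu0]
            have hdlj : dl r j = 1 := by rw [hjr]; exact dl_r1 r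
            rcases pos_cases a.length q with hh | hh | hh | ⟨δ, hh⟩
            · omega
            · subst hh; rw [hu1, hdlj]; omega
            · subst hh; rw [hu2, hdlj]; omega
            · subst hh
              have := hp.2.1.2.2 (a.length + 3 + δ) (by omega) (by omega)
              rw [hu2, hdlj] at this
              omega
          exact hp.2.2 a.length (by omega) hhighm
        · exact hj'
      rw [if_pos rfl, set_w2 a b j i (r+1) r, set_w1 a b j (r+1) i r]
      exact Relation.EqvGen.rel _ _ (KnuthStep.k2 a b i j r h1 hj)
    · subst h
      rw [if_neg (by omega)]
      exact hout _ (Or.inr (by omega)) r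
  -- Low part : pattern 1
  have hiffL : ∀ x < (a ++ [j,i,r+1] ++ b).length,
      (UnpairedLow r (a ++ [j,i,r+1] ++ b) x ↔ UnpairedLow r (a ++ [j,r+1,i] ++ b) x) := by
    intro x hx
    rcases pos_cases a.length x with h | h | h | ⟨δ, h⟩
    · rcases Nat.lt_or_ge x a.length with h' | h'
      · exact (hoiff x (Or.inl h')).2
      · have hxm : x = a.length := by omega
        subst hxm
        exact low_congr hlen hht he1 he2 he3 _ (by rw [getD_w0, getD_w0]) (by omega)
          (fun hcon => by omega)
    · subst h
      exact iff_of_false (notLow_letter (by rw [getD_w1]; omega))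
        (notLow_letter (by rw [getD_w1]; omega))
    · subst h
      exact iff_of_false (notLow_letter (by rw [getD_w2]; omega))
        (notLow_letter (by rw [getD_w2]; omega))
    · subst h
      exact (hoiff _ (Or.inr (by omega))).2
  have hsetL : ∀ q, Las (UnpairedLow r (a ++ [j,i,r+1] ++ b))
      (a ++ [j,i,r+1] ++ b).length q →
      KnuthEquiv ((a ++ [j,i,r+1] ++ b).set q (r+1)) ((a ++ [j,r+1,i] ++ b).set q (r+1)) := by
    intro q hq
    have hletter := hq.2.1.2.1
    rcases pos_cases a.length q with h | h | h | ⟨δ, h⟩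
    · rcases Nat.lt_or_ge q a.length with h' | h'
      · exact hout q (Or.inl h') (r+1)
      · have hxm : q = a.length := by omega
        subst hxm
        rw [getD_w0] at hletter
        rw [set_w0 a b j i (r+1) (r+1), set_w0 a b j (r+1) i (r+1)]
        exact Relation.EqvGen.rel _ _ (KnuthStep.k2 a b i (r+1) (r+1) (by omega)
          (le_refl _))
    · subst h; rw [getD_w1] at hletter; omega
    · subst h; rw [getD_w2] at hletter; omega
    · subst h
      exact hout _ (Or.inr (by omega)) (r+1)
  have H := build_high2 hlen hiffH hpq (by omega) (fun _ => hP1) (fun _ => hQ0)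
    (fun x hx1 hx2 => by exfalso; omega) hsetH
  have L := build_low1 hlen hiffL hsetL
  exact ⟨H.1, H.2, L.1, L.2⟩

/-- the hard k2-step: `i = r`, `k = r+1`, `j = r+1`. -/
lemma k2_hard (r : ℕ) (a b : List ℕ) :
    Transfer r (a ++ [r+1, r, r+1] ++ b) (a ++ [r+1, r+1, r] ++ b) := by
  have hlu : (a ++ [r+1,r,r+1] ++ b).length = a.length + 3 + b.length := wlen a b (r+1) r (r+1)
  have hlv : (a ++ [r+1,r+1,r] ++ b).length = a.length + 3 + b.length := wlen a b (r+1) (r+1) r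
  have hlen : (a ++ [r+1,r,r+1] ++ b).length = (a ++ [r+1,r+1,r] ++ b).length := by omega
  have hht := hht_swap23 r a b (r+1) r (r+1)
  have hu0 : ht r (a ++ [r+1,r,r+1] ++ b) a.length = ht r a a.length := ht_w0 r a b (r+1) r (r+1)
  have hv0 : ht r (a ++ [r+1,r+1,r] ++ b) a.length = ht r a a.length := ht_w0 r a b (r+1) (r+1) r
  have hu1 : ht r (a ++ [r+1,r,r+1] ++ b) (a.length + 1) = ht r a a.length + 1 := by
    rw [ht_w1, dl_r1]
  have hv1 : ht r (a ++ [r+1,r+1,r] ++ b) (a.length + 1) = ht r a a.length + 1 := by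
    rw [ht_w1, dl_r1]
  have hu2 : ht r (a ++ [r+1,r,r+1] ++ b) (a.length + 2) = ht r a a.length := by
    rw [ht_w2, dl_r1, dl_r]; ring
  have hv2 : ht r (a ++ [r+1,r+1,r] ++ b) (a.length + 2) = ht r a a.length + 2 := by
    rw [ht_w2, dl_r1]; ring
  have hu3 : ∀ δ, ht r (a ++ [r+1,r,r+1] ++ b) (a.length + 3 + δ) =
      ht r a a.length + 1 + ht r b δ := by
    intro δ; rw [ht_w3, dl_r1, dl_r]; ring
  have hv3 : ∀ δ, ht r (a ++ [r+1,r+1,r] ++ b) (a.length + 3 + δ) =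
      ht r a a.length + 1 + ht r b δ := by
    intro δ; rw [ht_w3, dl_r1, dl_r]; ring
  have he1 : ht r (a ++ [r+1,r,r+1] ++ b) a.length = ht r (a ++ [r+1,r+1,r] ++ b) a.length :=
    hht _ (by omega)
  have he2 : ht r (a ++ [r+1,r,r+1] ++ b) a.length ≤
      ht r (a ++ [r+1,r,r+1] ++ b) (a.length+2) := by
    rw [hu0, hu2]
  have he3 : ht r (a ++ [r+1,r+1,r] ++ b) a.length ≤
      ht r (a ++ [r+1,r+1,r] ++ b) (a.length+2) := by
    rw [hv0, hv2]; omega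
  have hoiff := outside_iff r a b (r+1) r (r+1) (r+1) (r+1) r (a.length+2) a.length hht he1
    he2 he3 (by omega) (by omega) (by omega) (by omega)
  have hout : ∀ p, (p < a.length ∨ a.length + 3 ≤ p) → ∀ t,
      KnuthEquiv ((a ++ [r+1,r,r+1] ++ b).set p t) ((a ++ [r+1,r+1,r] ++ b).set p t) := by
    intro p hp t
    rcases hp with h | h
    · rw [set_wlow a b (r+1) r (r+1) h t, set_wlow a b (r+1) (r+1) r h t]
      exact Relation.EqvGen.rel _ _ (KnuthStep.k2 _ b r (r+1) (r+1) (by omega) (le_refl _))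
    · obtain ⟨δ, rfl⟩ : ∃ δ, p = a.length + 3 + δ := ⟨p - a.length - 3, by omega⟩
      rw [set_whigh a b (r+1) r (r+1) δ t, set_whigh a b (r+1) (r+1) r δ t]
      exact Relation.EqvGen.rel _ _ (KnuthStep.k2 a _ r (r+1) (r+1) (by omega) (le_refl _))
  have hnotHu0 : ¬ UnpairedHigh r (a ++ [r+1,r,r+1] ++ b) a.length := by
    refine notHigh_le (show a.length < a.length + 2 by omega) (by omega) ?_
    rw [hu0, hu2]
  have hnotHv1 : ¬ UnpairedHigh r (a ++ [r+1,r+1,r] ++ b) (a.length + 1) := by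
    refine notHigh_le (show a.length + 1 < a.length + 3 + 0 by omega) (by omega) ?_
    rw [hv1, hv3 0, ht_zero]; omega
  have hnotLu1 : ¬ UnpairedLow r (a ++ [r+1,r,r+1] ++ b) (a.length + 1) := by
    refine notLow_ge (show a.length ≤ a.length + 1 by omega) ?_
    rw [hu0, show a.length + 1 + 1 = a.length + 2 from rfl, hu2]
  have hnotLv2 : ¬ UnpairedLow r (a ++ [r+1,r+1,r] ++ b) (a.length + 2) := by
    refine notLow_ge (show a.length + 1 ≤ a.length + 2 by omega) ?_
    rw [hv1, show a.length + 2 + 1 = a.length + 3 + 0 from rfl, hv3 0, ht_zero]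
    omega
  -- High part : pattern 2 with endpoints (m+2, m)
  have hiffH : ∀ x < (a ++ [r+1,r,r+1] ++ b).length, x ≠ a.length + 2 → x ≠ a.length →
      (UnpairedHigh r (a ++ [r+1,r,r+1] ++ b) x ↔ UnpairedHigh r (a ++ [r+1,r+1,r] ++ b) x) := by
    intro x hx hx2 hx0
    rcases pos_cases a.length x with h | h | h | ⟨δ, h⟩
    · exact (hoiff x (Or.inl (by omega))).1
    · subst h
      exact iff_of_false (notHigh_letter (by rw [getD_w1]; omega)) hnotHv1
    · exact absurd h hx2
    · subst h
      exact (hoiff _ (Or.inr (by omega))).1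
  have hpq : UnpairedHigh r (a ++ [r+1,r,r+1] ++ b) (a.length + 2) ↔
      UnpairedHigh r (a ++ [r+1,r+1,r] ++ b) a.length := by
    refine (endpoint_high (u := a ++ [r+1,r+1,r] ++ b) (v := a ++ [r+1,r,r+1] ++ b) (by omega)
      hlen.symm (by omega) (getD_w0 a b (r+1) (r+1) r) (getD_w2 a b (r+1) r (r+1))
      (by rw [hv0, hu2]) (fun q hq => (hht q (by omega)).symm) ?_).symm
    intro q hq1 hq2
    rcases Nat.lt_or_ge q (a.length + 2) with hh | hh
    · have hqm : q = a.length + 1 := by omega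
      subst hqm
      rw [hv0, hv1]; omega
    · have hqm : q = a.length + 2 := by omega
      subst hqm
      rw [hv0, hv2]; omega
  have hsetH : ∀ p, Fir (UnpairedHigh r (a ++ [r+1,r,r+1] ++ b))
      (a ++ [r+1,r,r+1] ++ b).length p →
      KnuthEquiv ((a ++ [r+1,r,r+1] ++ b).set p r)
        ((a ++ [r+1,r+1,r] ++ b).set (if p = a.length + 2 then a.length else p) r) := by
    intro p hp
    have hletter := hp.2.1.2.1
    rcases pos_cases a.length p with h | h | h | ⟨δ, h⟩
    · rcases Nat.lt_or_ge p a.length with h' | h'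
      · rw [if_neg (by omega)]
        exact hout p (Or.inl h') r
      · have hxm : p = a.length := by omega
        subst hxm
        exact absurd hp.2.1 hnotHu0
    · subst h; rw [getD_w1] at hletter; omega
    · subst h
      rw [if_pos rfl, set_w2 a b (r+1) r (r+1) r, set_w0 a b (r+1) (r+1) r r]
      exact Relation.EqvGen.symm _ _ (Relation.EqvGen.rel _ _
        (KnuthStep.k1 a b r r (r+1) (le_refl _) (by omega)))
    · subst h
      rw [if_neg (by omega)]
      exact hout _ (Or.inr (by omega)) r
  -- Low part : pattern 1
  have hiffL : ∀ x < (a ++ [r+1,r,r+1] ++ b).length,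
      (UnpairedLow r (a ++ [r+1,r,r+1] ++ b) x ↔ UnpairedLow r (a ++ [r+1,r+1,r] ++ b) x) := by
    intro x hx
    rcases pos_cases a.length x with h | h | h | ⟨δ, h⟩
    · rcases Nat.lt_or_ge x a.length with h' | h'
      · exact (hoiff x (Or.inl h')).2
      · have hxm : x = a.length := by omega
        subst hxm
        exact iff_of_false (notLow_letter (by rw [getD_w0]; omega))
          (notLow_letter (by rw [getD_w0]; omega))
    · subst h
      exact iff_of_false hnotLu1 (notLow_letter (by rw [getD_w1]; omega))
    · subst h
      exact iff_of_false (notLow_letter (by rw [getD_w2]; omega)) hnotLv2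
    · subst h
      exact (hoiff _ (Or.inr (by omega))).2
  have hsetL : ∀ q, Las (UnpairedLow r (a ++ [r+1,r,r+1] ++ b))
      (a ++ [r+1,r,r+1] ++ b).length q →
      KnuthEquiv ((a ++ [r+1,r,r+1] ++ b).set q (r+1))
        ((a ++ [r+1,r+1,r] ++ b).set q (r+1)) := by
    intro q hq
    have hletter := hq.2.1.2.1
    rcases pos_cases a.length q with h | h | h | ⟨δ, h⟩
    · rcases Nat.lt_or_ge q a.length with h' | h'
      · exact hout q (Or.inl h') (r+1)
      · have hxm : q = a.length := by omega
        subst hxm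
        rw [getD_w0] at hletter; omega
    · subst h; exact absurd hq.2.1 hnotLu1
    · subst h; rw [getD_w2] at hletter; omega
    · subst h
      exact hout _ (Or.inr (by omega)) (r+1)
  have H := build_high2 hlen hiffH hpq (by omega) (fun _ => hnotHu0) (fun _ =>
    notHigh_letter (by rw [getD_w2]; omega))
    (fun x hx1 hx2 => by
      have hxm : x = a.length + 1 := by omega
      subst hxm
      exact ⟨notHigh_letter (by rw [getD_w1]; omega), hnotHv1⟩) hsetH
  have L := build_low1 hlen hiffL hsetL
  exact ⟨H.1, H.2, L.1, L.2⟩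

lemma transfer_k2 (r : ℕ) (a b : List ℕ) (i j k : ℕ) (h1 : i < j) (h2 : j ≤ k) :
    Transfer r (a ++ [j, i, k] ++ b) (a ++ [j, k, i] ++ b) := by
  rcases eq_or_ne i r with hir | hir
  · obtain rfl : r = i := hir.symm
    rcases eq_or_ne k (r+1) with hkr1 | hkr1
    · obtain rfl : r + 1 = k := hkr1.symm
      obtain rfl : r + 1 = j := by omega
      exact k2_hard r a b
    · exact k2_ir r a b j k h1 h2 hkr1
  · rcases eq_or_ne i (r+1) with hir1 | hir1
    · obtain rfl : r + 1 = i := hir1.symm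
      exact k2_ir1 r a b j k h1 h2
    · rcases eq_or_ne k r with hkr | hkr
      · obtain rfl : r = k := hkr.symm
        exact k2_kr r a b i j h1 h2
      · rcases eq_or_ne k (r+1) with hkr1 | hkr1
        · obtain rfl : r + 1 = k := hkr1.symm
          exact k2_kr1 r a b i j h1 h2 hir
        · exact k2_none r a b i j k h1 h2 hir hir1 hkr hkr1

lemma goal_of_step {r : ℕ} {u v : List ℕ} (h : KnuthStep u v) : Goal r u v := by
  cases h with
  | k1 a b i j k h1 h2 => exact goal_of_transfer (transfer_k1 r a b i j k h1 h2)
  | k2 a b i j k h1 h2 => exact goal_of_transfer (transfer_k2 r a b i j k h1 h2)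

end StmtAux


/-- If `u` and `v` are Knuth equivalent, then `e_r u` and `e_r v` are Knuth equivalent
(in particular one is empty iff the other is); the same holds for `f_r`. -/
theorem stmt6 (r : ℕ) (u v : List ℕ) (h : KnuthEquiv u v) :
    ((eOp r u = none ↔ eOp r v = none) ∧
      ∀ u' v', eOp r u = some u' → eOp r v = some v' → KnuthEquiv u' v') ∧
    ((fOp r u = none ↔ fOp r v = none) ∧
      ∀ u' v', fOp r u = some u' → fOp r v = some v' → KnuthEquiv u' v') := by
  have goal : StmtAux.Goal r u v := by
    induction h with
    | rel x y hxy => exact StmtAux.goal_of_step hxy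
    | refl x => exact StmtAux.goal_refl r x
    | symm x y hxy ih => exact StmtAux.goal_symm ih
    | trans x y z hxy hyz ih1 ih2 => exact StmtAux.goal_trans ih1 ih2
  exact goal
end
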